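/- arXiv:1709.03068 — 5 statements merged into one kernel-verified Lean document; each statement's English description precedes it below -/
import Mathlib

section
/- Let $V' \subseteq V$ be vector spaces of polynomials (viewed as subspaces of the span of multilinear monomials). If a weight assignment $\mathrm{wt}$ is a basis isolating weight assignment (BIWA) for $V$, then $\mathrm{wt}$ is also a BIWA for $V'$. (A weight assignment $\mathrm{wt}: \mathrm{Mons} \to \mathbb{N}^k$ is a BIWA for $V$ if there exists a set $B$ of monomials indexing a column basis of $V$ such that distinct monomials in $B$ receive distinct weights, and every column indexed by a monomial outside $B$ lies in the span of columns indexed by monomials in $B$ of strictly smaller weight under lexicographic order.) -/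
/-- Lexicographic order on weight tuples in `ℕ^k`. -/
def LexLt {k : ℕ} (a b : Fin k → ℕ) : Prop :=
  ∃ i : Fin k, (∀ j : Fin k, j < i → a j = b j) ∧ a i < b i

/-- The column of the (matrix associated to the) space `V` of polynomials indexed by the
monomial `m`: the linear functional sending a polynomial in `V` to its coefficient at `m`. -/
def col {F Mon : Type*} [Field F] (V : Submodule F (Mon → F)) (m : Mon) :
    V →ₗ[F] F :=
  (LinearMap.proj m).comp V.subtype

/-- `wt` is a basis isolating weight assignment for the space `V` of polynomials:
there is a set `B` of monomials indexing a basis of the column space of `V` such that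
distinct monomials of `B` get distinct weights, and every column outside `B` is in the
span of the columns of `B` of strictly smaller (lexicographic) weight. -/
def IsBIWA {F Mon : Type*} [Field F] {k : ℕ}
    (wt : Mon → Fin k → ℕ) (V : Submodule F (Mon → F)) : Prop :=
  ∃ B : Set Mon,
    (∀ m₁ ∈ B, ∀ m₂ ∈ B, m₁ ≠ m₂ → wt m₁ ≠ wt m₂) ∧
    LinearIndependent F (fun m : B => col V (m : Mon)) ∧
    ∀ m : Mon, m ∉ B →
      col V m ∈ Submodule.span F (col V '' {m' | m' ∈ B ∧ LexLt (wt m') (wt m)})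

/-- `LexLt` agrees with the lexicographic order on `Lex (Fin k → ℕ)`. -/
theorem lexLt_iff {k : ℕ} (a b : Fin k → ℕ) : LexLt a b ↔ toLex a < toLex b :=
  Iff.rfl

/-- A family whose members are not in the span of members of strictly smaller
"weight" (for an injective weight into a suitable order) is linearly independent. -/
theorem linearIndependent_of_wt {K M ι β : Type*} [Field K] [AddCommGroup M] [Module K M]
    [Preorder β] (htri : ∀ a b : β, a ≠ b → a < b ∨ b < a)
    (f : ι → β) (hf : Function.Injective f) (v : ι → M)
    (h : ∀ i, v i ∉ Submodule.span K (v '' {j | f j < f i})) :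
    LinearIndependent K v := by
  classical
  rw [linearIndependent_iff']
  intro s g hsum i hi
  by_contra hgi
  set t := s.filter (fun j => g j ≠ 0) with ht
  have hne : t.Nonempty := ⟨i, by simp [ht, hi, hgi]⟩
  obtain ⟨b, hb, hbmax⟩ := (t.image f).exists_maximal (hne.image f)
  obtain ⟨i₀, hi₀t, rfl⟩ := Finset.mem_image.mp hb
  have hgi₀ : g i₀ ≠ 0 := (Finset.mem_filter.mp hi₀t).2
  have hsum' : ∑ j ∈ t, g j • v j = 0 := by
    rw [← hsum]
    apply Finset.sum_subset (Finset.filter_subset _ _)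
    intro x hx hxn
    have : g x = 0 := by
      by_contra hgx
      exact hxn (Finset.mem_filter.mpr ⟨hx, hgx⟩)
    simp [this]
  have h2 : g i₀ • v i₀ + ∑ j ∈ t.erase i₀, g j • v j = 0 := by
    rw [← Finset.add_sum_erase t (fun j => g j • v j) hi₀t] at hsum'
    exact hsum'
  have hv : v i₀ = (-(g i₀)⁻¹) • ∑ j ∈ t.erase i₀, g j • v j := by
    have : g i₀ • v i₀ = -∑ j ∈ t.erase i₀, g j • v j := by
      rw [eq_neg_iff_add_eq_zero]; exact h2
    rw [neg_smul, ← smul_neg, ← this, ← smul_assoc, smul_eq_mul,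
      inv_mul_cancel₀ hgi₀, one_smul]
  apply h i₀
  rw [hv]
  refine Submodule.smul_mem _ _ (Submodule.sum_mem _ ?_)
  intro j hj
  have hj' := Finset.mem_erase.mp hj
  refine Submodule.smul_mem _ _ (Submodule.subset_span ⟨j, ?_, rfl⟩)
  rcases htri (f j) (f i₀) (fun e => hj'.1 (hf e)) with h1 | h1
  · exact h1
  · exact absurd (hbmax (Finset.mem_image_of_mem f hj'.2) h1.le) (not_le_of_gt h1)

/-- if `wt` is a BIWA for `V` and `V' ⊆ V`, then `wt` is a BIWA for `V'`. -/
theorem biwa_of_subspace {F Mon : Type*} [Field F] {k : ℕ}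
    (V V' : Submodule F (Mon → F)) (hle : V' ≤ V)
    (wt : Mon → Fin k → ℕ) (h : IsBIWA wt V) : IsBIWA wt V' := by
  classical
  obtain ⟨B, hdist, _hli, hspan⟩ := h
  set φ : (V →ₗ[F] F) →ₗ[F] (V' →ₗ[F] F) :=
    LinearMap.lcomp F F (Submodule.inclusion hle) with hφ
  have hcol : ∀ m, col V' m = φ (col V m) := by
    intro m; ext x; rfl
  have himg : ∀ S : Set Mon, col V' '' S = φ '' (col V '' S) := by
    intro S
    rw [Set.image_image]
    exact congrArg (· '' S) (funext fun m => hcol m)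
  set B' : Set Mon := {m | m ∈ B ∧
    col V' m ∉ Submodule.span F (col V' '' {m' | m' ∈ B ∧ LexLt (wt m') (wt m)})} with hB'
  have wf : WellFounded (fun m₁ m₂ : Mon => toLex (wt m₁) < toLex (wt m₂)) :=
    InvImage.wf (fun m => toLex (wt m)) wellFounded_lt
  have key : ∀ m, m ∈ B → col V' m ∈ Submodule.span F
      (col V' '' {m' | m' ∈ B' ∧ toLex (wt m') ≤ toLex (wt m)}) := by
    intro m
    induction m using wf.induction with
    | _ m ih =>
      intro hmB
      by_cases hm' : m ∈ B'
      · exact Submodule.subset_span ⟨m, ⟨hm', le_refl _⟩, rfl⟩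
      · have hmem : col V' m ∈
            Submodule.span F (col V' '' {m' | m' ∈ B ∧ LexLt (wt m') (wt m)}) := by
          by_contra hc; exact hm' ⟨hmB, hc⟩
        refine Submodule.span_le.mpr ?_ hmem
        rintro _ ⟨m', ⟨hm'B, hlt⟩, rfl⟩
        have hlt' : toLex (wt m') < toLex (wt m) := (lexLt_iff _ _).mp hlt
        refine Submodule.span_mono (Set.image_mono ?_) (ih m' hlt' hm'B)
        intro x hx
        exact ⟨hx.1, hx.2.trans hlt'.le⟩
  have step : ∀ m, col V' m ∈
      Submodule.span F (col V' '' {m' | m' ∈ B ∧ LexLt (wt m') (wt m)}) →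
      col V' m ∈ Submodule.span F (col V' '' {m' | m' ∈ B' ∧ LexLt (wt m') (wt m)}) := by
    intro m hm
    refine Submodule.span_le.mpr ?_ hm
    rintro _ ⟨m', ⟨hm'B, hlt⟩, rfl⟩
    have hlt' : toLex (wt m') < toLex (wt m) := (lexLt_iff _ _).mp hlt
    refine Submodule.span_mono (Set.image_mono ?_) (key m' hm'B)
    intro x hx
    exact ⟨hx.1, (lexLt_iff _ _).mpr (lt_of_le_of_lt hx.2 hlt')⟩
  have htri : ∀ a b : Lex (Fin k → ℕ), a ≠ b → a < b ∨ b < a := by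
    have ht := Pi.isTrichotomous_lex ((· < ·) : Fin k → Fin k → Prop)
      (fun {_} => ((· < ·) : ℕ → ℕ → Prop)) (wellFounded_lt)
    intro a b hab
    rcases @trichotomous _ _ ht a b with h1 | h1 | h1
    · exact Or.inl h1
    · exact absurd h1 hab
    · exact Or.inr h1
  refine ⟨B', fun m₁ h₁ m₂ h₂ => hdist m₁ h₁.1 m₂ h₂.1, ?_, ?_⟩
  · refine linearIndependent_of_wt htri (fun m : B' => toLex (wt (m : Mon))) ?_ _ ?_
    · intro a b hab
      by_contra hne
      exact hdist a a.2.1 b b.2.1 (fun e => hne (Subtype.ext e)) (by simpa using hab)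
    · intro i hi_in
      apply i.2.2
      refine Submodule.span_mono ?_ hi_in
      rintro _ ⟨j, hj, rfl⟩
      exact ⟨(j : Mon), ⟨j.2.1, (lexLt_iff _ _).mpr hj⟩, rfl⟩
  · intro m hm
    by_cases hmB : m ∈ B
    · refine step m ?_
      by_contra hc; exact hm ⟨hmB, hc⟩
    · refine step m ?_
      have h0 := hspan m hmB
      have h1 : φ (col V m) ∈ Submodule.span F
          (φ '' (col V '' {m' | m' ∈ B ∧ LexLt (wt m') (wt m)})) :=
        Submodule.apply_mem_span_image_of_mem_span φ h0
      rw [hcol, himg]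
      exact h1
end

section
/- Shuffling commutes with products in the following sense: if $f$ has degree $d_1$, $g$ has degree $d_2$, $\sigma_1 \in S_{d_1}$, $\sigma_2 \in S_{d_2}$, and $0 \le p \le d_2$, then there exists $\sigma \in S_{d_1+d_2}$, depending only on $\sigma_1, \sigma_2, p, d_1, d_2$ (not on $f$ or $g$), such that $\Delta_{\sigma_1}(f) \cdot \Delta_{\sigma_2}(g) = \Delta_\sigma(f \times_p g)$ for all homogeneous $f, g$ of the respective degrees. -/
/-- The shuffling map `Δ_σ` on homogeneous degree-`d` non-commutative polynomials
(coefficient functions on words of length `d`); on words, `Δ_σ(x_w) = x_{w ∘ σ}`. -/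
def shuffle {F : Type*} [Field F] {n d : ℕ} (σ : Equiv.Perm (Fin d)) :
    ((Fin d → Fin n) → F) →ₗ[F] ((Fin d → Fin n) → F) where
  toFun f := fun v => f (v ∘ σ.symm)
  map_add' := by intros; rfl
  map_smul' := by intros; rfl

/-- The word `x_{w_1}⋯x_{w_{d₁}} ×_p x_{v_1}⋯x_{v_{d₂}} =
`x_{v_1}⋯x_{v_p} x_{w_1}⋯x_{w_{d₁}} x_{v_{p+1}}⋯x_{v_{d₂}}`. -/
def insWord {n d₁ d₂ : ℕ} (p : ℕ) (hp : p ≤ d₂) (w : Fin d₁ → Fin n)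
    (v : Fin d₂ → Fin n) : Fin (d₁ + d₂) → Fin n := fun i =>
  if h : (i : ℕ) < p then v ⟨i, lt_of_lt_of_le h hp⟩
  else if h2 : (i : ℕ) < p + d₁ then w ⟨(i : ℕ) - p, by omega⟩
  else v ⟨(i : ℕ) - d₁, by have hi := i.isLt; omega⟩

/-- The bilinear product `×_p` on homogeneous non-commutative polynomials, extending
`insWord` on words.  `×_0` is the ordinary concatenation product. -/
def timesP {F : Type*} [Field F] {n d₁ d₂ : ℕ} (p : ℕ) (hp : p ≤ d₂)
    (f : (Fin d₁ → Fin n) → F) (g : (Fin d₂ → Fin n) → F) :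
    (Fin (d₁ + d₂) → Fin n) → F :=
  fun u => ∑ w : Fin d₁ → Fin n, ∑ v : Fin d₂ → Fin n,
    if insWord p hp w v = u then f w * g v else 0

/-- Extract the `w`-part of `insWord p _ w v`. -/
def eW {n d₁ d₂ : ℕ} (p : ℕ) (_hp : p ≤ d₂) (u : Fin (d₁ + d₂) → Fin n) :
    Fin d₁ → Fin n := fun i => u ⟨p + i, by have := i.isLt; omega⟩

/-- Extract the `v`-part of `insWord p _ w v`. -/
def eV {n d₁ d₂ : ℕ} (p : ℕ) (hp : p ≤ d₂) (u : Fin (d₁ + d₂) → Fin n) :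
    Fin d₂ → Fin n := fun j =>
  if h : (j : ℕ) < p then u ⟨j, by have := j.isLt; omega⟩
  else u ⟨d₁ + j, by have := j.isLt; omega⟩

lemma eW_insWord {n d₁ d₂ : ℕ} (p : ℕ) (hp : p ≤ d₂) (w : Fin d₁ → Fin n)
    (v : Fin d₂ → Fin n) : eW p hp (insWord p hp w v) = w := by
  funext i
  have hi := i.isLt
  simp only [eW, insWord]
  rw [dif_neg (by simp), dif_pos (by simp <;> omega)]
  congr 1
  ext
  simp

lemma eV_insWord {n d₁ d₂ : ℕ} (p : ℕ) (hp : p ≤ d₂) (w : Fin d₁ → Fin n)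
    (v : Fin d₂ → Fin n) : eV p hp (insWord p hp w v) = v := by
  funext j
  have hj := j.isLt
  simp only [eV, insWord]
  by_cases h : (j : ℕ) < p
  · rw [dif_pos h, dif_pos (by simpa using h)]
  · rw [dif_neg h, dif_neg (by simp <;> omega), dif_neg (by simp <;> omega)]
    congr 1
    ext
    simp

lemma insWord_eW_eV {n d₁ d₂ : ℕ} (p : ℕ) (hp : p ≤ d₂) (u : Fin (d₁ + d₂) → Fin n) :
    insWord p hp (eW p hp u) (eV p hp u) = u := by
  funext i
  have hi := i.isLt
  simp only [insWord, eW, eV]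
  by_cases h : (i : ℕ) < p
  · rw [dif_pos h, dif_pos (by simpa using h)]
  · rw [dif_neg h]
    by_cases h2 : (i : ℕ) < p + d₁
    · rw [dif_pos h2]
      congr 1
      ext
      simp
      omega
    · rw [dif_neg h2, dif_neg (by simp <;> omega)]
      congr 1
      ext
      simp
      omega

lemma timesP_apply {F : Type*} [Field F] {n d₁ d₂ : ℕ} (p : ℕ) (hp : p ≤ d₂)
    (f : (Fin d₁ → Fin n) → F) (g : (Fin d₂ → Fin n) → F) (u : Fin (d₁ + d₂) → Fin n) :
    timesP p hp f g u = f (eW p hp u) * g (eV p hp u) := by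
  unfold timesP
  have key : ∀ w v, insWord p hp w v = u ↔ w = eW p hp u ∧ v = eV p hp u := by
    intro w v
    constructor
    · intro h
      exact ⟨by rw [← h, eW_insWord], by rw [← h, eV_insWord]⟩
    · rintro ⟨rfl, rfl⟩
      exact insWord_eW_eV p hp u
  rw [Finset.sum_eq_single (eW p hp u)]
  · rw [Finset.sum_eq_single (eV p hp u)]
    · rw [if_pos (insWord_eW_eV p hp u)]
    · intro v _ hv
      rw [if_neg]
      rw [key]
      tauto
    · simp
  · intro w _ hw
    apply Finset.sum_eq_zero
    intro v _
    rw [if_neg]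
    rw [key]
    tauto
  · simp

/-- The inverse of the mixing permutation. -/
def mixInv {d₁ d₂ : ℕ} (σ₁ : Equiv.Perm (Fin d₁)) (σ₂ : Equiv.Perm (Fin d₂))
    (p : ℕ) (hp : p ≤ d₂) : Fin (d₁ + d₂) → Fin (d₁ + d₂) := fun j =>
  if h : (j : ℕ) < p then
    ⟨d₁ + σ₂.symm ⟨j, by omega⟩, by have := (σ₂.symm ⟨j, by omega⟩).isLt; omega⟩
  else if h2 : (j : ℕ) < p + d₁ then
    ⟨σ₁.symm ⟨(j : ℕ) - p, by omega⟩, by have := (σ₁.symm ⟨(j : ℕ) - p, by omega⟩).isLt; omega⟩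
  else
    ⟨d₁ + σ₂.symm ⟨(j : ℕ) - d₁, by have := j.isLt; omega⟩,
      by have := (σ₂.symm ⟨(j : ℕ) - d₁, by have := j.isLt; omega⟩).isLt; omega⟩

lemma mixInv_injective {d₁ d₂ : ℕ} (σ₁ : Equiv.Perm (Fin d₁)) (σ₂ : Equiv.Perm (Fin d₂))
    (p : ℕ) (hp : p ≤ d₂) : Function.Injective (mixInv σ₁ σ₂ p hp) := by
  intro a b hab
  have ha := a.isLt
  have hb := b.isLt
  simp only [mixInv] at hab
  ext
  by_cases h1 : (a : ℕ) < p <;> by_cases h3 : (a : ℕ) < p + d₁ <;>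
    by_cases h2 : (b : ℕ) < p <;> by_cases h4 : (b : ℕ) < p + d₁ <;>
    [skip; omega; skip; skip; omega; omega; omega; omega;
     skip; omega; skip; skip; skip; omega; skip; skip] <;>
    simp only [dif_pos, dif_neg, h1, h2, h3, h4, not_false_iff] at hab <;>
  · first
    | (have e1 := (σ₁.symm ⟨(a : ℕ) - p, by omega⟩).isLt
       have e2 := (σ₁.symm ⟨(b : ℕ) - p, by omega⟩).isLt
       simp only [Fin.mk.injEq, Nat.add_left_cancel_iff, Fin.val_inj,
         EmbeddingLike.apply_eq_iff_eq] at hab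
       omega)
    | (simp only [Fin.mk.injEq, Nat.add_left_cancel_iff, Fin.val_inj,
         EmbeddingLike.apply_eq_iff_eq] at hab
       omega)

/-- shuffling commutes with products: for `σ₁ ∈ S_{d₁}`, `σ₂ ∈ S_{d₂}` and
`0 ≤ p ≤ d₂` there is `σ ∈ S_{d₁+d₂}` (depending only on `σ₁, σ₂, p, d₁, d₂`) such that
`Δ_{σ₁}(f) ⋅ Δ_{σ₂}(g) = Δ_σ(f ×_p g)` for all homogeneous `f, g` of the respective
degrees (where `⋅ = ×_0` is concatenation). -/
theorem shuffle_mul_eq_shuffle_timesP {F : Type*} [Field F] {n d₁ d₂ : ℕ}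
    (σ₁ : Equiv.Perm (Fin d₁)) (σ₂ : Equiv.Perm (Fin d₂)) (p : ℕ) (hp : p ≤ d₂) :
    ∃ σ : Equiv.Perm (Fin (d₁ + d₂)),
      ∀ (f : (Fin d₁ → Fin n) → F) (g : (Fin d₂ → Fin n) → F),
        timesP 0 (Nat.zero_le d₂) (shuffle σ₁ f) (shuffle σ₂ g)
          = shuffle σ (timesP p hp f g) := by
  have hbij : Function.Bijective (mixInv σ₁ σ₂ p hp) :=
    (Finite.injective_iff_bijective).mp (mixInv_injective σ₁ σ₂ p hp)
  refine ⟨(Equiv.ofBijective _ hbij).symm, ?_⟩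
  intro f g
  funext u
  rw [timesP_apply]
  show _ = timesP p hp f g (u ∘ (Equiv.ofBijective _ hbij).symm.symm)
  rw [timesP_apply]
  have hsymm : ∀ j, (Equiv.ofBijective _ hbij).symm.symm j = mixInv σ₁ σ₂ p hp j :=
    fun j => rfl
  have hw : eW 0 (Nat.zero_le d₂) u ∘ σ₁.symm
      = eW p hp (u ∘ (Equiv.ofBijective _ hbij).symm.symm) := by
    funext i
    have hi := i.isLt
    have hσ := (σ₁.symm i).isLt
    simp only [Function.comp, eW, hsymm, mixInv]
    rw [dif_neg (by simp), dif_pos (by simp <;> omega)]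
    all_goals congr 1
    all_goals simp only [Fin.mk.injEq, Nat.zero_add, Fin.val_inj, Fin.eta]
    all_goals congr 1
    all_goals ext
    all_goals simp
  have hv : eV 0 (Nat.zero_le d₂) u ∘ σ₂.symm
      = eV p hp (u ∘ (Equiv.ofBijective _ hbij).symm.symm) := by
    funext j
    have hj := j.isLt
    simp only [Function.comp, eV, hsymm, mixInv]
    rw [dif_neg (by omega)]
    by_cases h : (j : ℕ) < p
    · rw [dif_pos h, dif_pos (by simpa using h)]
      all_goals congr 1
      all_goals simp only [Fin.mk.injEq, Nat.add_left_cancel_iff, Fin.val_inj, Fin.eta]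
      all_goals congr 1
      all_goals ext
      all_goals simp
    · rw [dif_neg h, dif_neg (by simp <;> omega), dif_neg (by simp <;> omega)]
      all_goals congr 1
      all_goals simp only [Fin.mk.injEq, Nat.add_left_cancel_iff, Fin.val_inj, Fin.eta]
      all_goals congr 1
      all_goals ext
      all_goals simp
  show (shuffle σ₁ f) (eW 0 (Nat.zero_le d₂) u) * (shuffle σ₂ g) (eV 0 (Nat.zero_le d₂) u) = _
  simp only [shuffle, LinearMap.coe_mk, AddHom.coe_mk]
  rw [hw, hv]
end

section
/- Let $T_d$ be the complete binary tree of depth $d$, which has $D = 2^{d+1}-1$ nodes. Let $k \le D$ be the number whose binary expansion is $1010\cdots$ (alternating bits starting with 1, of length $d+1$). Then every subset $A$ of the vertices of $T_d$ with $|A| = k$ has edge boundary $|E(A, \bar{A})| \ge d/4$, i.e. the edge isoperimetric profile of $T_d$ at $k$ is at least $d/4$. -/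
/-- The number `k ≤ 2^{d+1} - 1` whose binary expansion is `1010⋯` (alternating bits of
length `d+1`, starting with `1` at the most significant bit `2^d`). -/
def altNum (d : ℕ) : ℕ :=
  ∑ j ∈ Finset.range (d + 1), if (d - j) % 2 = 0 then 2 ^ j else 0

/-- The complete binary tree `T_d` of depth `d` in heap indexing: vertices are
`1, …, 2^{d+1} - 1` and the children of `x < 2^d` are `2x` and `2x+1`.  For a vertex set
`A`, `treeBoundary d A` is the number of edges of `T_d` with exactly one endpoint in `A`
(each edge being identified with its child endpoint `x ∈ [2, 2^{d+1})`, whose parent is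
`x / 2`). -/
def treeBoundary (d : ℕ) (A : Finset ℕ) : ℕ :=
  ((Finset.Ico 2 (2 ^ (d + 1))).filter fun x => ¬((x ∈ A) ↔ (x / 2 ∈ A))).card


/-- Transition counter: `G n p` counts the positions where consecutive bits of the
infinite bit string `p, n₀, n₁, n₂, …, 0, 0, …` differ. -/
def G (n : ℕ) (p : Bool) : ℕ :=
  if h : n = 0 then cond p 1 0
  else (if n.bodd = p then 0 else 1) + G (n / 2) n.bodd
decreasing_by exact Nat.div_lt_self (Nat.pos_of_ne_zero h) one_lt_two

lemma G_zero (p : Bool) : G 0 p = cond p 1 0 := by rw [G]; simp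

lemma G_rec (n : ℕ) (p : Bool) :
    G n p = (if n.bodd = p then 0 else 1) + G (n / 2) n.bodd := by
  by_cases h : n = 0
  · subst h
    rw [G_zero, G_zero]
    show cond p 1 0 = (if false = p then 0 else 1) + 0
    cases p <;> simp
  · rw [G]; simp [h]

def W (n : ℕ) : ℕ := G n false

lemma bodd_two_mul (n : ℕ) : (2 * n).bodd = false := by
  simp [Nat.bodd_mul]

lemma bodd_two_mul_add_one (n : ℕ) : (2 * n + 1).bodd = true := by
  simp [Nat.bodd_add, Nat.bodd_mul]

lemma G_even (n : ℕ) (p : Bool) :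
    G (2 * n) p = (if p then 1 else 0) + G n false := by
  rw [G_rec]
  rw [bodd_two_mul]
  have : 2 * n / 2 = n := by omega
  rw [this]
  cases p <;> simp

lemma G_odd (n : ℕ) (p : Bool) :
    G (2 * n + 1) p = (if p then 0 else 1) + G n true := by
  rw [G_rec]
  rw [bodd_two_mul_add_one]
  have : (2 * n + 1) / 2 = n := by omega
  rw [this]
  cases p <;> simp

lemma Gtf (n : ℕ) : (n.bodd = true → G n false = G n true + 1) ∧
    (n.bodd = false → G n true = G n false + 1) := by
  constructor <;> intro h <;>
    rw [G_rec n false, G_rec n true, h] <;> simp [Nat.add_comm]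

lemma Gtf' (n : ℕ) : G n true ≤ G n false + 1 ∧ G n false ≤ G n true + 1 := by
  rcases Bool.eq_false_or_eq_true n.bodd with h | h
  · have := (Gtf n).1 h; omega
  · have := (Gtf n).2 h; omega

/-- Key lemma: `G (s+1) false` and `G s true` differ by at most 1. -/
lemma K : ∀ s : ℕ, G (s + 1) false ≤ G s true + 1 ∧ G s true ≤ G (s + 1) false + 1 := by
  intro s
  induction s using Nat.strong_induction_on with
  | _ s ih =>
    rcases Nat.even_or_odd s with ⟨t, ht⟩ | ⟨t, ht⟩
    · subst ht
      have h1 : G (t + t + 1) false = 1 + G t true := by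
        have : t + t = 2 * t := by ring
        rw [this, G_odd]; simp
      have h2 : G (t + t) true = 1 + G t false := by
        have : t + t = 2 * t := by ring
        rw [this, G_even]; simp
      have := Gtf' t
      omega
    · subst ht
      have h1 : G (2 * t + 1 + 1) false = G (t + 1) false := by
        have : 2 * t + 1 + 1 = 2 * (t + 1) := by ring
        rw [this, G_even]; simp
      have h2 : G (2 * t + 1) true = G t true := by
        rw [G_odd]; simp
      have := ih t (by omega)
      omega

lemma Lp (a : ℕ) (p : Bool) : G (a + 1) p ≤ G a p + 2 ∧ G a p ≤ G (a + 1) p + 2 := by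
  rcases Nat.even_or_odd a with ⟨t, ht⟩ | ⟨t, ht⟩
  · subst ht
    have h1 : G (t + t) p = (if p then 1 else 0) + G t false := by
      have : t + t = 2 * t := by ring
      rw [this, G_even]
    have h2 : G (t + t + 1) p = (if p then 0 else 1) + G t true := by
      have : t + t = 2 * t := by ring
      rw [this, G_odd]
    have := Gtf' t
    cases p <;> simp at h1 h2 <;> omega
  · subst ht
    have h1 : G (2 * t + 1) p = (if p then 0 else 1) + G t true := G_odd t p
    have h2 : G (2 * t + 1 + 1) p = (if p then 1 else 0) + G (t + 1) false := by
      have : 2 * t + 1 + 1 = 2 * (t + 1) := by ring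
      rw [this, G_even]
    have := K t
    cases p <;> simp at h1 h2 <;> omega

lemma W_double (n : ℕ) : W (2 * n) = W n := by
  unfold W; rw [G_even]; simp

lemma W_odd (n : ℕ) : W (2 * n + 1) = 1 + G n true := by
  unfold W; rw [G_odd]; simp

/-- Adding a power of two changes `W` by at most 2. -/
lemma Pm : ∀ m a : ℕ, W (a + 2 ^ m) ≤ W a + 2 ∧ W a ≤ W (a + 2 ^ m) + 2 := by
  intro m
  induction m using Nat.strong_induction_on with
  | _ m ih =>
    match m with
    | 0 =>
      intro a
      exact Lp a false
    | 1 =>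
      intro a
      rcases Nat.even_or_odd a with ⟨t, ht⟩ | ⟨t, ht⟩
      · subst ht
        have e1 : t + t + 2 ^ 1 = 2 * (t + 1) := by ring
        have e2 : t + t = 2 * t := by ring
        rw [e1, e2, W_double, W_double]
        have := ih 0 (by omega) t
        simpa using this
      · subst ht
        have e1 : 2 * t + 1 + 2 ^ 1 = 2 * (t + 1) + 1 := by ring
        rw [e1, W_odd, W_odd]
        have := Lp t true
        omega
    | (m + 2) =>
      intro a
      rcases Nat.even_or_odd a with ⟨t, ht⟩ | ⟨t, ht⟩
      · subst ht
        have e1 : t + t + 2 ^ (m + 2) = 2 * (t + 2 ^ (m + 1)) := by ring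
        have e2 : t + t = 2 * t := by ring
        rw [e1, e2, W_double, W_double]
        exact ih (m + 1) (by omega) t
      · subst ht
        have e1 : 2 * t + 1 + 2 ^ (m + 2) = 2 * (t + 2 ^ (m + 1)) + 1 := by ring
        rw [e1, W_odd, W_odd]
        have hpar : (t + 2 ^ (m + 1)).bodd = t.bodd := by
          have : (2 : ℕ) ^ (m + 1) = 2 * 2 ^ m := by ring
          rw [this, Nat.bodd_add]
          simp [Nat.bodd_mul]
        have hW := ih (m + 1) (by omega) t
        rcases Bool.eq_false_or_eq_true t.bodd with hb | hb
        · have h1 := (Gtf t).1 hb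
          have h2 := (Gtf (t + 2 ^ (m + 1))).1 (by rw [hpar]; exact hb)
          unfold W at hW
          omega
        · have h1 := (Gtf t).2 hb
          have h2 := (Gtf (t + 2 ^ (m + 1))).2 (by rw [hpar]; exact hb)
          unfold W at hW
          omega

section P2

lemma G_rep_true : ∀ m : ℕ, G (2 ^ m - 1) true ≤ 1 := by
  intro m
  induction m with
  | zero => simp [G_zero]
  | succ m ih =>
    have h : (2:ℕ) ^ (m + 1) - 1 = 2 * (2 ^ m - 1) + 1 := by
      have : (1:ℕ) ≤ 2 ^ m := Nat.one_le_two_pow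
      have : (2:ℕ) ^ (m+1) = 2 * 2 ^ m := by ring
      omega
    rw [h, G_odd]
    simpa using ih

lemma W_rep (m : ℕ) : W (2 ^ m - 1) ≤ 2 := by
  match m with
  | 0 => simp [W, G_zero]
  | (m+1) =>
    have h : (2:ℕ) ^ (m + 1) - 1 = 2 * (2 ^ m - 1) + 1 := by
      have : (1:ℕ) ≤ 2 ^ m := Nat.one_le_two_pow
      have : (2:ℕ) ^ (m+1) = 2 * 2 ^ m := by ring
      omega
    rw [h, W_odd]
    have := G_rep_true m
    omega

/-- Adding `2^m - 1` changes `W` by at most 4 (in both directions). -/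
lemma W_add_rep (a m : ℕ) :
    W (a + (2 ^ m - 1)) ≤ W a + 4 ∧ W a ≤ W (a + (2 ^ m - 1)) + 4 := by
  match m, a with
  | 0, a => simp
  | (m+1), 0 =>
    constructor
    · have := W_rep (m+1)
      simp only [Nat.zero_add]
      have hW0 : W 0 = 0 := by simp [W, G_zero]
      omega
    · have hW0 : W 0 = 0 := by simp [W, G_zero]
      omega
  | (m+1), (b+1) =>
    have h1 : (1:ℕ) ≤ 2 ^ (m+1) := Nat.one_le_two_pow
    have he : b + 1 + (2 ^ (m+1) - 1) = b + 2 ^ (m+1) := by omega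
    rw [he]
    have hp := Pm (m+1) b
    have hs := Lp b false
    unfold W at *
    omega

def sumE (l : List ℕ) : ℕ := (l.map (fun m => 2 ^ m - 1)).sum

@[simp] lemma sumE_nil : sumE [] = 0 := rfl

@[simp] lemma sumE_cons (m : ℕ) (l : List ℕ) : sumE (m :: l) = (2 ^ m - 1) + sumE l := by
  simp [sumE]

lemma sumE_append (l₁ l₂ : List ℕ) : sumE (l₁ ++ l₂) = sumE l₁ + sumE l₂ := by
  simp [sumE]

lemma W_sumE : ∀ P : List ℕ, P ≠ [] → W (sumE P) + 2 ≤ 4 * P.length := by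
  intro P
  induction P with
  | nil => simp
  | cons m P ih =>
    intro _
    by_cases hP : P = []
    · subst hP
      simp only [sumE_cons, sumE_nil, Nat.add_zero, List.length_cons, List.length_nil]
      have := W_rep m
      omega
    · have h1 := ih hP
      have h2 := (W_add_rep (sumE P) m).1
      simp only [sumE_cons, List.length_cons]
      rw [Nat.add_comm (2 ^ m - 1) (sumE P)]
      omega

lemma W_le_add_sumE : ∀ (Q : List ℕ) (k : ℕ), W k ≤ W (k + sumE Q) + 4 * Q.length := by
  intro Q
  induction Q with
  | nil => simp
  | cons q Q ih =>
    intro k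
    have h1 := (W_add_rep k q).2
    have h2 := ih (k + (2 ^ q - 1))
    have he : k + sumE (q :: Q) = k + (2 ^ q - 1) + sumE Q := by
      simp [sumE_cons]; omega
    rw [he]
    simp only [List.length_cons]
    omega

def betaN : ℕ → ℕ
  | 0 => 0
  | (d+1) => 2 * betaN d + (if d % 2 = 0 then 1 else 0)

lemma altNum_zero : altNum 0 = 1 := by simp [altNum]

lemma altNum_succ (d : ℕ) :
    altNum (d + 1) = 2 * altNum d + (if d % 2 = 1 then 1 else 0) := by
  unfold altNum
  rw [Finset.sum_range_succ']
  have h1 : ∀ j, (if (d + 1 - (j + 1)) % 2 = 0 then (2:ℕ) ^ (j+1) else 0)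
      = 2 * (if (d - j) % 2 = 0 then 2 ^ j else 0) := by
    intro j
    have : d + 1 - (j + 1) = d - j := by omega
    rw [this]
    split <;> ring
  rw [Finset.sum_congr rfl (fun j _ => h1 j), ← Finset.mul_sum]
  have h2 : (if (d + 1 - 0) % 2 = 0 then (2:ℕ) ^ 0 else 0) = (if d % 2 = 1 then 1 else 0) := by
    have : (d + 1) % 2 = 0 ↔ d % 2 = 1 := by omega
    simp only [Nat.sub_zero, pow_zero]
    split <;> split <;> omega
  rw [h2]

lemma altNum_pos (d : ℕ) : 1 ≤ altNum d := by
  induction d with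
  | zero => simp [altNum_zero]
  | succ d ih => rw [altNum_succ]; omega

lemma betaN_pos (d : ℕ) : 1 ≤ betaN (d + 1) := by
  induction d with
  | zero => simp [betaN]
  | succ d ih => show 1 ≤ 2 * betaN (d+1) + _; omega

lemma alt_beta (d : ℕ) : altNum d + betaN d = 2 ^ (d + 1) - 1 := by
  induction d with
  | zero => simp [altNum_zero, betaN]
  | succ d ih =>
    rw [altNum_succ]
    show _ + (2 * betaN d + _) = _
    have h1 : (1:ℕ) ≤ 2 ^ (d+1) := Nat.one_le_two_pow
    have h2 : (2:ℕ) ^ (d+1+1) = 2 * 2 ^ (d+1) := by ring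
    by_cases hd : d % 2 = 1
    · rw [if_pos hd, if_neg (by omega)]
      omega
    · rw [if_neg hd, if_pos (by omega)]
      omega

lemma altNum_parity (d : ℕ) : altNum d % 2 = (d + 1) % 2 := by
  induction d with
  | zero => simp [altNum_zero]
  | succ d ih =>
    rw [altNum_succ]
    by_cases hd : d % 2 = 1
    · rw [if_pos hd]; omega
    · rw [if_neg hd]; omega

lemma betaN_parity (d : ℕ) : betaN d % 2 = d % 2 := by
  induction d with
  | zero => simp [betaN]
  | succ d ih =>
    show (2 * betaN d + if d % 2 = 0 then 1 else 0) % 2 = _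
    by_cases hd : d % 2 = 0
    · rw [if_pos hd]; omega
    · rw [if_neg hd]; omega

lemma bodd_false_of (n : ℕ) (h : n % 2 = 0) : n.bodd = false := by
  obtain ⟨t, ht⟩ : ∃ t, n = 2 * t := ⟨n / 2, by omega⟩
  subst ht; exact bodd_two_mul t

lemma bodd_true_of (n : ℕ) (h : n % 2 = 1) : n.bodd = true := by
  obtain ⟨t, ht⟩ : ∃ t, n = 2 * t + 1 := ⟨n / 2, by omega⟩
  subst ht; exact bodd_two_mul_add_one t

lemma W_odd_even (n : ℕ) (h : n % 2 = 0) : W (2 * n + 1) = W n + 2 := by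
  rw [W_odd]
  have hb : n.bodd = false := bodd_false_of n h
  have := (Gtf n).2 hb
  unfold W
  omega

lemma W_odd_odd (n : ℕ) (h : n % 2 = 1) : W (2 * n + 1) = W n := by
  rw [W_odd]
  have hb : n.bodd = true := bodd_true_of n h
  have := (Gtf n).1 hb
  unfold W
  omega

lemma W_one : W 1 = 2 := by
  have : (1:ℕ) = 2 * 0 + 1 := by norm_num
  rw [this, W_odd_even 0 (by norm_num)]
  simp [W, G_zero]

lemma W_zero : W 0 = 0 := by simp [W, G_zero]

lemma W_Walt : ∀ d : ℕ, 2 * d + 2 ≤ W (altNum d) + W (betaN d) := by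
  intro d
  induction d with
  | zero => rw [altNum_zero]; show _ ≤ W 1 + W (betaN 0); simp [betaN, W_one, W_zero]
  | succ d ih =>
    rw [altNum_succ]
    show _ ≤ _ + W (2 * betaN d + if d % 2 = 0 then 1 else 0)
    rcases Nat.even_or_odd d with ⟨t, ht⟩ | ⟨t, ht⟩
    · have hd : d % 2 = 0 := by omega
      have hβ : betaN d % 2 = 0 := by rw [betaN_parity]; omega
      rw [if_neg (by omega), if_pos hd]
      simp only [Nat.add_zero]
      rw [W_double, W_odd_even _ hβ]
      omega
    · have hd : d % 2 = 1 := by omega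
      have hα : altNum d % 2 = 0 := by rw [altNum_parity]; omega
      rw [if_pos hd, if_neg (by omega)]
      simp only [Nat.add_zero]
      rw [W_double, W_odd_even _ hα]
      omega

end P2

section P3

/-- Vertices of the subtree of the infinite heap-indexed binary tree rooted at `v`,
of height `h`. -/
def VS (v h : ℕ) : Finset ℕ :=
  (Finset.range (h+1)).biUnion (fun j => Finset.Ico (v * 2 ^ j) ((v+1) * 2 ^ j))

/-- Edge-index set (child endpoints of edges) of the subtree rooted at `v`, height `h`. -/
def ES (v h : ℕ) : Finset ℕ :=
  (Finset.range h).biUnion (fun j => Finset.Ico (v * 2 ^ (j+1)) ((v+1) * 2 ^ (j+1)))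

def cntb (π : ℕ → Bool) (v h : ℕ) : ℕ := ((VS v h).filter (fun x => π x = true)).card

def bndb (π : ℕ → Bool) (v h : ℕ) : ℕ :=
  ((ES v h).filter (fun x => π x ≠ π (x / 2))).card

lemma div_pow_eq (x v j : ℕ) : x / 2 ^ j = v ↔ (v * 2 ^ j ≤ x ∧ x < (v+1) * 2 ^ j) := by
  have h2 : 0 < 2 ^ j := Nat.pow_pos (by norm_num)
  constructor
  · rintro rfl
    refine ⟨Nat.div_mul_le_self x _, ?_⟩
    exact (Nat.div_lt_iff_lt_mul h2).mp (Nat.lt_succ_self _)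
  · rintro ⟨h1, h2'⟩
    have ha : v ≤ x / 2 ^ j := (Nat.le_div_iff_mul_le h2).mpr h1
    have hb : x / 2 ^ j < v + 1 := (Nat.div_lt_iff_lt_mul h2).mpr h2'
    omega

lemma mem_VS (x v h : ℕ) : x ∈ VS v h ↔ ∃ j, j ≤ h ∧ x / 2 ^ j = v := by
  unfold VS
  simp only [Finset.mem_biUnion, Finset.mem_range, Finset.mem_Ico, Nat.lt_succ_iff]
  constructor
  · rintro ⟨j, hj, hx⟩
    exact ⟨j, hj, (div_pow_eq x v j).mpr hx⟩
  · rintro ⟨j, hj, hx⟩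
    exact ⟨j, hj, (div_pow_eq x v j).mp hx⟩

lemma mem_ES (x v h : ℕ) : x ∈ ES v h ↔ ∃ j, j < h ∧ x / 2 ^ (j+1) = v := by
  unfold ES
  simp only [Finset.mem_biUnion, Finset.mem_range, Finset.mem_Ico]
  constructor
  · rintro ⟨j, hj, hx⟩
    exact ⟨j, hj, (div_pow_eq x v (j+1)).mpr hx⟩
  · rintro ⟨j, hj, hx⟩
    exact ⟨j, hj, (div_pow_eq x v (j+1)).mp hx⟩

lemma div_pow_succ (x i : ℕ) : x / 2 ^ (i+1) = (x / 2 ^ i) / 2 := by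
  rw [Nat.div_div_eq_div_mul, ← pow_succ]

lemma children_disj {v x i j : ℕ} (hv : 1 ≤ v)
    (hj : x / 2 ^ j = 2 * v) (hi : x / 2 ^ i = 2 * v + 1) : False := by
  rcases le_total i j with hij | hij
  · have he : x / 2 ^ j = (x / 2 ^ i) / 2 ^ (j - i) := by
      rw [Nat.div_div_eq_div_mul, ← pow_add]
      congr 2
      omega
    rw [hi] at he
    rcases Nat.eq_zero_or_pos (j - i) with h0 | h0
    · rw [h0] at he; simp at he; omega
    · have h2 : (2:ℕ) ≤ 2 ^ (j - i) := by
        calc (2:ℕ) = 2 ^ 1 := rfl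
        _ ≤ 2 ^ (j - i) := Nat.pow_le_pow_right (by norm_num) h0
      have hle : (2 * v + 1) / 2 ^ (j - i) ≤ (2 * v + 1) / 2 :=
        Nat.div_le_div_left h2 (by norm_num)
      omega
  · have he : x / 2 ^ i = (x / 2 ^ j) / 2 ^ (i - j) := by
      rw [Nat.div_div_eq_div_mul, ← pow_add]
      congr 2
      omega
    rw [hj] at he
    rcases Nat.eq_zero_or_pos (i - j) with h0 | h0
    · rw [h0] at he; simp at he; omega
    · have h2 : (2:ℕ) ≤ 2 ^ (i - j) := by
        calc (2:ℕ) = 2 ^ 1 := rfl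
        _ ≤ 2 ^ (i - j) := Nat.pow_le_pow_right (by norm_num) h0
      have hle : (2 * v) / 2 ^ (i - j) ≤ (2 * v) / 2 :=
        Nat.div_le_div_left h2 (by norm_num)
      omega

lemma VS_succ (v h : ℕ) (hv : 1 ≤ v) :
    VS v (h+1) = insert v (VS (2*v) h ∪ VS (2*v+1) h) := by
  ext x
  simp only [Finset.mem_insert, Finset.mem_union, mem_VS]
  constructor
  · rintro ⟨j, hj, hx⟩
    match j with
    | 0 =>
      left
      simpa using hx
    | (i+1) =>
      right
      have h2 : (x / 2 ^ i) / 2 = v := by rw [← div_pow_succ]; exact hx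
      have : x / 2 ^ i = 2*v ∨ x / 2 ^ i = 2*v + 1 := by omega
      rcases this with h | h
      · left; exact ⟨i, by omega, h⟩
      · right; exact ⟨i, by omega, h⟩
  · rintro (rfl | ⟨j, hj, hx⟩ | ⟨j, hj, hx⟩)
    · exact ⟨0, by omega, by simp⟩
    · exact ⟨j+1, by omega, by rw [div_pow_succ, hx]; omega⟩
    · exact ⟨j+1, by omega, by rw [div_pow_succ, hx]; omega⟩

lemma ES_succ (v h : ℕ) (hv : 1 ≤ v) :
    ES v (h+1) = insert (2*v) (insert (2*v+1) (ES (2*v) h ∪ ES (2*v+1) h)) := by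
  ext x
  simp only [Finset.mem_insert, Finset.mem_union, mem_ES]
  constructor
  · rintro ⟨j, hj, hx⟩
    match j with
    | 0 =>
      have h2 : x / 2 = v := by
        have : (2:ℕ) ^ (0+1) = 2 := rfl
        rw [this] at hx
        exact hx
      have : x = 2*v ∨ x = 2*v+1 := by omega
      tauto
    | (i+1) =>
      right; right
      have h2 : (x / 2 ^ (i+1)) / 2 = v := by rw [← div_pow_succ]; exact hx
      have : x / 2 ^ (i+1) = 2*v ∨ x / 2 ^ (i+1) = 2*v + 1 := by omega
      rcases this with h | h
      · left; exact ⟨i, by omega, h⟩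
      · right; exact ⟨i, by omega, h⟩
  · rintro (rfl | rfl | ⟨j, hj, hx⟩ | ⟨j, hj, hx⟩)
    · refine ⟨0, by omega, ?_⟩
      have : (2:ℕ) ^ (0+1) = 2 := rfl
      rw [this]; omega
    · refine ⟨0, by omega, ?_⟩
      have : (2:ℕ) ^ (0+1) = 2 := rfl
      rw [this]; omega
    · exact ⟨j+1, by omega, by rw [div_pow_succ, hx]; omega⟩
    · exact ⟨j+1, by omega, by rw [div_pow_succ, hx]; omega⟩

lemma root_notmem_children (v h : ℕ) (hv : 1 ≤ v) :
    v ∉ VS (2*v) h ∪ VS (2*v+1) h := by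
  intro hmem
  rcases Finset.mem_union.mp hmem with hm | hm <;> rw [mem_VS] at hm <;>
    obtain ⟨j, _, hj⟩ := hm <;> have := Nat.div_le_self v (2 ^ j) <;> omega

lemma VS_children_disjoint (v h : ℕ) (hv : 1 ≤ v) :
    Disjoint (VS (2*v) h) (VS (2*v+1) h) := by
  rw [Finset.disjoint_left]
  intro x hx1 hx2
  rw [mem_VS] at hx1 hx2
  obtain ⟨j, _, hj⟩ := hx1
  obtain ⟨i, _, hi⟩ := hx2
  exact children_disj hv hj hi

lemma ES_children_disjoint (v h : ℕ) (hv : 1 ≤ v) :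
    Disjoint (ES (2*v) h) (ES (2*v+1) h) := by
  rw [Finset.disjoint_left]
  intro x hx1 hx2
  rw [mem_ES] at hx1 hx2
  obtain ⟨j, _, hj⟩ := hx1
  obtain ⟨i, _, hi⟩ := hx2
  exact children_disj hv hj hi

lemma notmem_ES_children (v h : ℕ) (hv : 1 ≤ v) (y : ℕ) (hy : y ≤ 2*v+1) :
    y ∉ ES (2*v) h ∪ ES (2*v+1) h := by
  intro hmem
  have key : ∀ u j, 2*v ≤ u → y / 2 ^ (j+1) = u → False := by
    intro u j hu hju
    have h2 : (2:ℕ) ≤ 2 ^ (j+1) := by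
      calc (2:ℕ) = 2 ^ 1 := rfl
      _ ≤ 2 ^ (j+1) := Nat.pow_le_pow_right (by norm_num) (by omega)
    have hle : y / 2 ^ (j+1) ≤ y / 2 := Nat.div_le_div_left h2 (by norm_num)
    omega
  rcases Finset.mem_union.mp hmem with hm | hm <;> rw [mem_ES] at hm <;>
    obtain ⟨j, _, hj⟩ := hm
  · exact key _ j (by omega) hj
  · exact key _ j (by omega) hj

lemma cnt_split (π : ℕ → Bool) (v h : ℕ) (hv : 1 ≤ v) :
    cntb π v (h+1) = (if π v = true then 1 else 0) + cntb π (2*v) h + cntb π (2*v+1) h := by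
  unfold cntb
  rw [VS_succ v h hv, Finset.filter_insert, Finset.filter_union]
  have hd : Disjoint ((VS (2*v) h).filter (fun x => π x = true))
      ((VS (2*v+1) h).filter (fun x => π x = true)) :=
    Finset.disjoint_filter_filter (VS_children_disjoint v h hv)
  have hvm : v ∉ (VS (2*v) h).filter (fun x => π x = true) ∪
      (VS (2*v+1) h).filter (fun x => π x = true) := by
    intro hmem
    apply root_notmem_children v h hv
    rcases Finset.mem_union.mp hmem with hm | hm
    · exact Finset.mem_union_left _ (Finset.filter_subset _ _ hm)
    · exact Finset.mem_union_right _ (Finset.filter_subset _ _ hm)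
  split
  · rw [Finset.card_insert_of_notMem hvm, Finset.card_union_of_disjoint hd]
    omega
  · rw [Finset.card_union_of_disjoint hd]
    omega

lemma bnd_split (π : ℕ → Bool) (v h : ℕ) (hv : 1 ≤ v) :
    bndb π v (h+1) = (if π (2*v) = π v then 0 else 1) + (if π (2*v+1) = π v then 0 else 1)
      + bndb π (2*v) h + bndb π (2*v+1) h := by
  unfold bndb
  rw [ES_succ v h hv, Finset.filter_insert, Finset.filter_insert, Finset.filter_union]
  have e1 : 2*v/2 = v := by omega
  have e2 : (2*v+1)/2 = v := by omega
  rw [e1, e2]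
  have hd : Disjoint ((ES (2*v) h).filter (fun x => π x ≠ π (x/2)))
      ((ES (2*v+1) h).filter (fun x => π x ≠ π (x/2))) :=
    Finset.disjoint_filter_filter (ES_children_disjoint v h hv)
  have hsub : ((ES (2*v) h).filter (fun x => π x ≠ π (x/2))) ∪
      ((ES (2*v+1) h).filter (fun x => π x ≠ π (x/2))) ⊆ ES (2*v) h ∪ ES (2*v+1) h := by
    apply Finset.union_subset_union (Finset.filter_subset _ _) (Finset.filter_subset _ _)
  have hm0 : (2*v) ∉ ES (2*v) h ∪ ES (2*v+1) h := notmem_ES_children v h hv _ (by omega)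
  have hm1 : (2*v+1) ∉ ES (2*v) h ∪ ES (2*v+1) h := notmem_ES_children v h hv _ (by omega)
  have hcard : (((ES (2*v) h).filter (fun x => π x ≠ π (x/2))) ∪
      ((ES (2*v+1) h).filter (fun x => π x ≠ π (x/2)))).card
      = ((ES (2*v) h).filter (fun x => π x ≠ π (x/2))).card
        + ((ES (2*v+1) h).filter (fun x => π x ≠ π (x/2))).card :=
    Finset.card_union_of_disjoint hd
  by_cases h1 : π (2*v) = π v
  · rw [if_neg (by simp [h1])]
    by_cases h2 : π (2*v+1) = π v
    · rw [if_neg (by simp [h2]), if_pos h1, if_pos h2, hcard]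
      show _ = (0 + 0) + _ + _
      omega
    · rw [if_pos (by simp [h2]), if_pos h1, if_neg h2]
      rw [Finset.card_insert_of_notMem (fun hmem => hm1 (hsub hmem)), hcard]
      show _ = (0 + 1) + _ + _
      omega
  · rw [if_pos (by simp [h1])]
    by_cases h2 : π (2*v+1) = π v
    · rw [if_neg (by simp [h2]), if_neg h1, if_pos h2]
      rw [Finset.card_insert_of_notMem (fun hmem => hm0 (hsub hmem)), hcard]
      show _ = (1 + 0) + _ + _
      omega
    · rw [if_pos (by simp [h2]), if_neg h1, if_neg h2]
      rw [Finset.card_insert_of_notMem, Finset.card_insert_of_notMem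
        (fun hmem => hm1 (hsub hmem)), hcard]
      · show _ = (1 + 1) + _ + _
        omega
      · intro hmem
        rcases Finset.mem_insert.mp hmem with he | hmem'
        · omega
        · exact hm0 (hsub hmem')

end P3

section P4

def TInv (π : ℕ → Bool) (v h : ℕ) : Prop :=
  ∃ P Q P' Q' : List ℕ,
    (cntb π v h + sumE Q = sumE P) ∧
    (cntb (fun x => !(π x)) v h + sumE Q' = sumE P') ∧
    (P.length + Q.length + P'.length + Q'.length ≤ 2 * bndb π v h + 1) ∧
    (π v = true → ∃ t, P = (h+1) :: t) ∧
    (π v = false → ∃ t, P' = (h+1) :: t)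

lemma cntb_congr {π π' : ℕ → Bool} (h : ∀ x, π x = π' x) (v hh : ℕ) :
    cntb π v hh = cntb π' v hh := by
  unfold cntb
  congr 1
  apply Finset.filter_congr
  intro x _
  rw [h x]

lemma bndb_congr {π π' : ℕ → Bool} (h : ∀ x, π x = π' x) (v hh : ℕ) :
    bndb π v hh = bndb π' v hh := by
  unfold bndb
  congr 1
  apply Finset.filter_congr
  intro x _
  rw [h x, h (x/2)]

lemma bndb_not (π : ℕ → Bool) (v hh : ℕ) : bndb (fun x => !(π x)) v hh = bndb π v hh := by
  unfold bndb
  congr 1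
  apply Finset.filter_congr
  intro x _
  constructor <;> intro h <;> simp_all

lemma inv_swap {π : ℕ → Bool} {v h : ℕ} (hInv : TInv (fun x => !(π x)) v h) : TInv π v h := by
  obtain ⟨P, Q, P', Q', h1, h2, h3, h4, h5⟩ := hInv
  have hc : cntb (fun x => !(!(π x))) v h = cntb π v h := cntb_congr (by simp) v h
  rw [hc] at h2
  refine ⟨P', Q', P, Q, h2, h1, ?_, ?_, ?_⟩
  · rw [← bndb_not π v h]; omega
  · intro hπ
    exact h5 (by simp [hπ])
  · intro hπ
    exact h4 (by simp [hπ])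

lemma cntb_zero (π : ℕ → Bool) (v : ℕ) : cntb π v 0 = if π v = true then 1 else 0 := by
  unfold cntb VS
  have : Finset.range 1 = {0} := rfl
  rw [this, Finset.singleton_biUnion]
  simp only [pow_zero, Nat.mul_one]
  rw [Nat.Ico_succ_singleton, Finset.filter_singleton]
  split <;> simp

lemma bndb_zero (π : ℕ → Bool) (v : ℕ) : bndb π v 0 = 0 := by
  unfold bndb ES
  simp

/-- Per-child adjustment in the inductive step (root satisfies `π v = true`). -/
lemma child_adjust (π : ℕ → Bool) (u h : ℕ) (hInv : TInv π u h) :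
    ∃ S T P2 Q2 : List ℕ,
      (cntb π u h + sumE T = (2 ^ (h+1) - 1) + sumE S) ∧
      (cntb (fun x => !(π x)) u h + sumE Q2 = sumE P2) ∧
      (S.length + T.length + P2.length + Q2.length + 1
        ≤ 2 * bndb π u h + 2 * (if π u = true then 0 else 1) + 1) := by
  obtain ⟨P, Q, P', Q', h1, h2, h3, h4, h5⟩ := hInv
  by_cases hu : π u = true
  · obtain ⟨t, ht⟩ := h4 hu
    subst ht
    rw [sumE_cons] at h1
    refine ⟨t, Q, P', Q', h1, h2, ?_⟩
    rw [if_pos hu]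
    simp only [List.length_cons] at h3
    omega
  · refine ⟨P, (h+1) :: Q, P', Q', ?_, h2, ?_⟩
    · rw [sumE_cons]
      omega
    · rw [if_neg hu]
      simp only [List.length_cons]
      omega

lemma tree_inv : ∀ (h v : ℕ) (π : ℕ → Bool), 1 ≤ v → TInv π v h := by
  intro h
  induction h with
  | zero =>
    intro v π hv
    by_cases hπ : π v = true
    · refine ⟨[1], [], [], [], ?_, ?_, ?_, fun _ => ⟨[], rfl⟩, fun hf => by simp [hπ] at hf⟩
      · rw [cntb_zero, if_pos hπ]; simp [sumE]
      · rw [cntb_zero]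
        simp [hπ, sumE]
      · rw [bndb_zero]; simp
    · refine ⟨[], [], [1], [], ?_, ?_, ?_, fun ht => by simp [ht] at hπ, fun _ => ⟨[], rfl⟩⟩
      · rw [cntb_zero, if_neg hπ]; simp [sumE]
      · rw [cntb_zero]
        have : (!(π v)) = true := by simp_all
        simp [this, sumE]
      · rw [bndb_zero]; simp
  | succ h ih =>
    have core : ∀ (v : ℕ) (π : ℕ → Bool), 1 ≤ v → π v = true → TInv π v (h+1) := by
      intro v π hv hπv
      obtain ⟨SL, TL, PL', QL', eqL, eqL', lenL⟩ :=
        child_adjust π (2*v) h (ih (2*v) π (by omega))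
      obtain ⟨SR, TR, PR', QR', eqR, eqR', lenR⟩ :=
        child_adjust π (2*v+1) h (ih (2*v+1) π (by omega))
      refine ⟨(h+2) :: (SL ++ SR), TL ++ TR, PL' ++ PR', QL' ++ QR',
        ?_, ?_, ?_, fun _ => ⟨SL ++ SR, rfl⟩, fun hf => by rw [hπv] at hf; cases hf⟩
      · rw [cnt_split π v h hv, if_pos hπv, sumE_cons, sumE_append, sumE_append]
        have hp1 : (1:ℕ) ≤ 2 ^ (h+1) := Nat.one_le_two_pow
        have hp2 : (2:ℕ) ^ (h+2) = 2 * 2 ^ (h+1) := by ring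
        omega
      · rw [cnt_split (fun x => !(π x)) v h hv, if_neg (by simp [hπv]), sumE_append, sumE_append]
        omega
      · rw [bnd_split π v h hv, hπv]
        simp only [List.length_cons, List.length_append]
        omega
    intro v π hv
    by_cases hπv : π v = true
    · exact core v π hv hπv
    · apply inv_swap
      apply core v (fun x => !(π x)) hv
      simp_all

end P4

section P5

lemma VS_one : ∀ d : ℕ, VS 1 d = Finset.Ico 1 (2 ^ (d+1)) := by
  intro d
  induction d with
  | zero =>
    unfold VS
    have : Finset.range 1 = {0} := rfl
    rw [this, Finset.singleton_biUnion]
    norm_num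
  | succ d ih =>
    unfold VS at ih ⊢
    rw [Finset.range_add_one, Finset.biUnion_insert, ih]
    have e1 : 1 * 2 ^ (d+1) = 2 ^ (d+1) := by ring
    have e2 : (1+1) * 2 ^ (d+1) = 2 ^ (d+1+1) := by ring
    rw [e1, e2, Finset.union_comm]
    exact Finset.Ico_union_Ico_eq_Ico Nat.one_le_two_pow
      (Nat.pow_le_pow_right (by norm_num) (by omega))

lemma ES_one : ∀ d : ℕ, ES 1 d = Finset.Ico 2 (2 ^ (d+1)) := by
  intro d
  induction d with
  | zero =>
    unfold ES
    simp
  | succ d ih =>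
    unfold ES at ih ⊢
    rw [Finset.range_add_one, Finset.biUnion_insert, ih]
    have e1 : 1 * 2 ^ (d+1) = 2 ^ (d+1) := by ring
    have e2 : (1+1) * 2 ^ (d+1) = 2 ^ (d+1+1) := by ring
    rw [e1, e2, Finset.union_comm]
    exact Finset.Ico_union_Ico_eq_Ico (by
        calc (2:ℕ) = 2 ^ 1 := rfl
        _ ≤ 2 ^ (d+1) := Nat.pow_le_pow_right (by norm_num) (by omega))
      (Nat.pow_le_pow_right (by norm_num) (by omega))

end P5

/-- every subset `A` of the vertices of `T_d` of size `k = altNum d`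
(binary expansion `1010⋯`) has edge boundary at least `d/4`. -/
theorem tree_eip (d : ℕ) (A : Finset ℕ) (hA : A ⊆ Finset.Ico 1 (2 ^ (d + 1)))
    (hcard : A.card = altNum d) :
    (d : ℝ) / 4 ≤ (treeBoundary d A : ℝ) := by
  rcases Nat.eq_zero_or_pos d with rfl | hd
  · simp only [Nat.cast_zero, zero_div]
    exact Nat.cast_nonneg _
  -- the Boolean indicator of A
  set π : ℕ → Bool := fun x => decide (x ∈ A) with hπ
  -- identify the counts
  have hcnt : cntb π 1 d = A.card := by
    unfold cntb
    rw [VS_one d]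
    have : (Finset.Ico 1 (2 ^ (d+1))).filter (fun x => π x = true)
        = (Finset.Ico 1 (2 ^ (d+1))).filter (fun x => x ∈ A) := by
      apply Finset.filter_congr
      intro x _
      simp [hπ]
    rw [this, Finset.filter_mem_eq_inter, Finset.inter_eq_right.mpr hA]
  have hsum : cntb π 1 d + cntb (fun x => !(π x)) 1 d = 2 ^ (d+1) - 1 := by
    unfold cntb
    rw [VS_one d]
    have h2 : (Finset.Ico 1 (2 ^ (d+1))).filter (fun x => (!(π x)) = true)
        = (Finset.Ico 1 (2 ^ (d+1))).filter (fun x => ¬(π x = true)) := by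
      apply Finset.filter_congr
      intro x _
      simp
    rw [h2, Finset.card_filter_add_card_filter_not, Nat.card_Ico]
  have hcnt' : cntb (fun x => !(π x)) 1 d = betaN d := by
    have hab := alt_beta d
    omega
  have hbnd : bndb π 1 d = treeBoundary d A := by
    unfold bndb treeBoundary
    rw [ES_one d]
    congr 1
    apply Finset.filter_congr
    intro x _
    simp [hπ, ne_eq, decide_eq_decide]
  -- apply the structure theorem
  obtain ⟨P, Q, P', Q', h1, h2, h3, _, _⟩ := tree_inv d 1 π (le_refl 1)
  rw [hcnt, hcard] at h1
  rw [hcnt'] at h2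
  rw [hbnd] at h3
  -- lower bounds on the representation lengths
  have hα : 1 ≤ altNum d := altNum_pos d
  have hβ : 1 ≤ betaN d := by
    obtain ⟨e, rfl⟩ : ∃ e, d = e + 1 := ⟨d - 1, by omega⟩
    exact betaN_pos e
  have hPne : P ≠ [] := by
    intro hP
    rw [hP] at h1
    simp at h1
    omega
  have hPne' : P' ≠ [] := by
    intro hP
    rw [hP] at h2
    simp at h2
    omega
  have c1 : W (altNum d) ≤ W (sumE P) + 4 * Q.length := by
    have := W_le_add_sumE Q (altNum d)
    rw [h1] at this
    exact this
  have c2 : W (sumE P) + 2 ≤ 4 * P.length := W_sumE P hPne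
  have c1' : W (betaN d) ≤ W (sumE P') + 4 * Q'.length := by
    have := W_le_add_sumE Q' (betaN d)
    rw [h2] at this
    exact this
  have c2' : W (sumE P') + 2 ≤ 4 * P'.length := W_sumE P' hPne'
  have hW := W_Walt d
  have hfinal : d + 1 ≤ 4 * treeBoundary d A := by omega
  rw [div_le_iff₀ (by norm_num : (0:ℝ) < 4)]
  have : (d : ℝ) ≤ ((4 * treeBoundary d A : ℕ) : ℝ) := by
    exact_mod_cast Nat.le_of_lt_succ (by omega)
  push_cast at this ⊢
  linarith
end

section
/- Let $f(y_1,y_2) = \sum_{i=1}^w u_i(y_1) v_i(y_2)$ be a nonzero bivariate polynomial of total degree $d$ over a field $\mathbb{F}$ with characteristic $0$ or characteristic greater than $d$. Then the univariate polynomial $f(t^w, t^{w-1} + t^w) \in \mathbb{F}[t]$ is nonzero. -/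
section GKSAux

open Polynomial Finset

variable {F : Type*} [Field F]

/-- Natural numbers in `(0, d]` are nonzero in `F` when `char = 0` or `char > d`. -/
lemma gks_cast_ne_zero {d : ℕ} (hchar : ringChar F = 0 ∨ d < ringChar F)
    {n : ℕ} (h0 : 0 < n) (hd : n ≤ d) : (n : F) ≠ 0 := by
  haveI : CharP F (ringChar F) := ringChar.charP F
  intro h
  rw [CharP.cast_eq_zero_iff F (ringChar F)] at h
  rcases hchar with h0' | h0'
  · rw [h0'] at h
    simp only [Nat.zero_dvd] at h
    omega
  · have := Nat.le_of_dvd h0 h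
    omega

lemma gks_cast_sub_ne_zero {d : ℕ} (hchar : ringChar F = 0 ∨ d < ringChar F)
    {a b : ℕ} (hab : a ≠ b) (ha : a ≤ d) (hb : b ≤ d) :
    (a : F) - (b : F) ≠ 0 := by
  rcases lt_or_gt_of_ne hab with h | h
  · intro hz
    have h1 : ((b - a : ℕ) : F) ≠ 0 := gks_cast_ne_zero hchar (by omega) (by omega)
    apply h1
    push_cast [Nat.cast_sub h.le]
    linear_combination -hz
  · intro hz
    have h1 : ((a - b : ℕ) : F) ≠ 0 := gks_cast_ne_zero hchar (by omega) (by omega)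
    apply h1
    push_cast [Nat.cast_sub h.le]
    linear_combination hz

lemma gks_theta_term (a : F) (n : ℕ) :
    (X + 1) * derivative (C a * (X + 1) ^ n) = C (a * n) * (X + 1) ^ n := by
  rw [derivative_C_mul, derivative_pow]
  cases n with
  | zero => simp
  | succ m =>
    rw [derivative_add, derivative_X, derivative_one, add_zero, mul_one]
    simp only [Nat.add_sub_cancel]
    rw [C_mul]
    ring

lemma gks_dvd_derivative {k : ℕ} {Q : F[X]} (h : (X : F[X]) ^ (k+1) ∣ Q) :
    (X : F[X]) ^ k ∣ derivative Q := by
  obtain ⟨R, rfl⟩ := h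
  rw [derivative_mul, derivative_X_pow]
  apply dvd_add
  · exact Dvd.dvd.mul_right (Dvd.dvd.mul_left (pow_dvd_pow X (by omega)) _) R
  · exact Dvd.dvd.mul_right (pow_dvd_pow X (by omega)) _

/-- Sparse polynomial lemma. -/
lemma gks_sparse {d : ℕ} (hchar : ringChar F = 0 ∨ d < ringChar F) :
    ∀ (s : ℕ) {ι : Type} (S : Finset ι) (lam : ι → F) (deg : ι → ℕ),
    S.card = s → S.Nonempty → (∀ i ∈ S, lam i ≠ 0) → (Set.InjOn deg S) →
    (∀ i ∈ S, deg i ≤ d) →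
    ¬ ((X : F[X]) ^ s ∣ ∑ i ∈ S, C (lam i) * (X + 1) ^ (deg i)) := by
  intro s
  induction s with
  | zero =>
    intro ι S lam deg hcard hne _ _ _ _
    exact (Finset.nonempty_iff_ne_empty.mp hne) (Finset.card_eq_zero.mp hcard)
  | succ s ih =>
    intro ι S lam deg hcard hne hlam hinj hdeg hdvd
    classical
    rcases s with _ | s
    · -- single term
      obtain ⟨a, ha⟩ := Finset.card_eq_one.mp hcard
      subst ha
      rw [zero_add, pow_one] at hdvd
      simp only [Finset.sum_singleton] at hdvd
      have h2 := (Polynomial.X_dvd_iff).mp hdvd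
      rw [Polynomial.coeff_mul] at h2
      simp only [Finset.Nat.antidiagonal_zero, Finset.sum_singleton, Polynomial.coeff_C_zero,
        Polynomial.coeff_X_add_one_pow, Nat.choose_zero_right, Nat.cast_one, mul_one] at h2
      exact hlam a (Finset.mem_singleton_self a) h2
    · -- at least two terms
      obtain ⟨i1, hi1⟩ := hne
      set Q : F[X] := ∑ i ∈ S, C (lam i) * (X + 1) ^ (deg i) with hQ
      have key : ∑ i ∈ S.erase i1, C (lam i * ((deg i : F) - (deg i1 : F))) * (X + 1) ^ (deg i)
          = (X + 1) * derivative Q - C ((deg i1 : F)) * Q := by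
        rw [hQ, derivative_sum, Finset.mul_sum, Finset.mul_sum, ← Finset.sum_sub_distrib]
        trans (∑ i ∈ S, C (lam i * ((deg i : F) - (deg i1 : F))) * (X + 1) ^ (deg i))
        · exact Finset.sum_erase S (by simp)
        apply Finset.sum_congr rfl
        intro i _
        rw [gks_theta_term]
        have hr : lam i * ((deg i : F) - (deg i1 : F))
            = lam i * (deg i : F) - (deg i1 : F) * lam i := by ring
        rw [hr, C_sub, map_mul, map_mul]
        ring
      have hdvd2 : (X : F[X]) ^ (s + 1) ∣
          ∑ i ∈ S.erase i1, C (lam i * ((deg i : F) - (deg i1 : F))) * (X + 1) ^ (deg i) := by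
        rw [key]
        apply dvd_sub
        · exact Dvd.dvd.mul_left (gks_dvd_derivative (by simpa using hdvd)) _
        · exact Dvd.dvd.mul_left (dvd_trans (pow_dvd_pow X (by omega)) hdvd) _
      refine ih (S.erase i1) _ _ ?_ ?_ ?_ ?_ ?_ hdvd2
      · rw [Finset.card_erase_of_mem hi1, hcard]
        omega
      · rw [← Finset.card_pos, Finset.card_erase_of_mem hi1, hcard]; omega
      · intro i hi
        have hiS := Finset.mem_of_mem_erase hi
        have hne' : deg i ≠ deg i1 := fun h =>
          (Finset.ne_of_mem_erase hi) (hinj hiS hi1 h)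
        exact mul_ne_zero (hlam i hiS)
          (gks_cast_sub_ne_zero hchar hne' (hdeg i hiS) (hdeg i1 hi1))
      · exact hinj.mono (fun x hx => Finset.mem_of_mem_erase hx)
      · intro i hi; exact hdeg i (Finset.mem_of_mem_erase hi)

lemma gks_coprime_pred (w : ℕ) (hw : 0 < w) : Nat.Coprime (w-1) w := by
  have h1 : Nat.Coprime (w-1) ((w-1)+1) :=
    Nat.coprime_self_add_right.mpr (Nat.coprime_one_right _)
  have h2 : (w-1)+1 = w := by omega
  rwa [h2] at h1

/-- Digit extraction: if `∑_{r<w} X^{(w-1)r} * expand w (P r) = 0` then all `P r = 0`. -/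
lemma gks_digit {w : ℕ} (hw : 0 < w) (P : ℕ → F[X])
    (h : ∑ r ∈ range w, (X : F[X]) ^ ((w-1)*r) * Polynomial.expand F w (P r) = 0) :
    ∀ r < w, P r = 0 := by
  intro r0 hr0
  ext n
  have hc := congrArg (fun Q : F[X] => Q.coeff ((w-1)*r0 + w*n)) h
  simp only [Polynomial.finset_sum_coeff, Polynomial.coeff_zero] at hc
  rw [Finset.sum_eq_single r0] at hc
  · rw [Polynomial.X_pow_mul, Polynomial.coeff_mul_X_pow'] at hc
    simp only [le_add_iff_nonneg_right, zero_le, if_true, Nat.add_sub_cancel_left] at hc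
    rw [Polynomial.coeff_expand hw] at hc
    simp only [Nat.mul_div_cancel_left _ hw, dvd_mul_right, if_true] at hc
    simpa using hc
  · intro r hr hrne
    rw [Polynomial.X_pow_mul, Polynomial.coeff_mul_X_pow']
    split_ifs with hle
    · rw [Polynomial.coeff_expand hw]
      rw [if_neg]
      intro hdvd
      -- derive contradiction : w ∣ (w-1)*r0 + w*n - (w-1)*r with r ≠ r0, both < w
      have hr' : r < w := Finset.mem_range.mp hr
      obtain ⟨q, hq⟩ := hdvd
      have heq : w*q + (w-1)*r = (w-1)*r0 + w*n := by omega
      have hmod : (w-1)*r ≡ (w-1)*r0 [MOD w] := by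
        have h1 : w*q + (w-1)*r ≡ 0 + (w-1)*r [MOD w] :=
          Nat.ModEq.add_right _ ((Nat.modEq_zero_iff_dvd).mpr (dvd_mul_right w q))
        have h2 : (w-1)*r0 + w*n ≡ (w-1)*r0 + 0 [MOD w] :=
          Nat.ModEq.add_left _ ((Nat.modEq_zero_iff_dvd).mpr (dvd_mul_right w n))
        rw [zero_add] at h1
        rw [add_zero] at h2
        have h2' : w*q + (w-1)*r ≡ (w-1)*r0 [MOD w] := by rw [heq]; exact h2
        exact h1.symm.trans h2'
      have hmod2 : r ≡ r0 [MOD w] := by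
        have hcop : Nat.gcd w (w-1) = 1 := (gks_coprime_pred w hw).symm
        exact Nat.ModEq.cancel_left_of_coprime hcop
          (by simpa [mul_comm] using hmod)
      have := Nat.ModEq.eq_of_lt_of_lt hmod2 hr' hr0
      exact hrne this
    · rfl
  · intro hr0'
    exact absurd (Finset.mem_range.mpr hr0) hr0'

/-- Splitting a sum over `range (w*K)` into blocks. -/
lemma gks_sum_range_mul {M : Type*} [AddCommMonoid M] (w : ℕ) (f : ℕ → M) :
    ∀ K, ∑ k ∈ range (w*K), f k = ∑ p ∈ range K, ∑ r ∈ range w, f (w*p + r) := by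
  intro K
  induction K with
  | zero => simp
  | succ K ih =>
    rw [Finset.sum_range_succ, ← ih, Nat.mul_succ]
    have hsplit : ∑ k ∈ range (w*K + w), f k
        = ∑ k ∈ range (w*K), f k + ∑ k ∈ Ico (w*K) (w*K + w), f k := by
      rw [Finset.range_eq_Ico, ← Finset.sum_Ico_consecutive f
        (m := 0) (n := w*K) (k := w*K + w) (by omega) (by omega)]
      rw [Finset.range_eq_Ico]
    rw [hsplit]
    congr 1
    rw [Finset.sum_Ico_eq_sum_range]
    have hww : w*K + w - w*K = w := by omega
    rw [hww]

/-- `(B+A)^n` expanded in powers of `A`, over a long range. -/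
lemma gks_add_pow (A B : F[X]) (n K : ℕ) (hnK : n < K) :
    (B + A)^n = ∑ k ∈ range K, (n.choose k : F[X]) * B^(n-k) * A^k := by
  rw [← Finset.sum_subset (Finset.range_subset_range.mpr hnK)
    (fun k _ hk => by
      have : n < k := by simpa using hk
      simp [Nat.choose_eq_zero_of_lt this])]
  rw [add_pow]
  rw [← Finset.sum_range_reflect]
  apply Finset.sum_congr rfl
  intro k hk
  have hk' : k ≤ n := by simpa using Nat.lt_succ_iff.mp (Finset.mem_range.mp hk)
  have h1 : n - 1 - k + (n - (n - 1 - k)) = n := by omega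
  have h2 : n + 1 - 1 - k = n - k := by omega
  have h3 : n - (n - k) = k := by omega
  rw [h2, h3, Nat.choose_symm hk']
  ring

/-- Bivariate Taylor expansion of a composition. -/
lemma gks_taylor (g A B : F[X]) (K : ℕ) (hK : g.natDegree < K) :
    g.comp (B + A) = ∑ k ∈ range K, (hasseDeriv k g).comp B * A ^ k := by
  conv_lhs => rw [comp_eq_sum_left, Polynomial.sum_def]
  have step1 : ∀ n ∈ g.support,
      C (g.coeff n) * (B+A)^n
      = ∑ k ∈ range K, C (g.coeff n) * ((n.choose k : F[X]) * B^(n-k) * A^k) := by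
    intro n hn
    rw [gks_add_pow A B n K (lt_of_le_of_lt (Polynomial.le_natDegree_of_mem_supp n hn) hK)]
    rw [Finset.mul_sum]
  rw [Finset.sum_congr rfl step1, Finset.sum_comm]
  apply Finset.sum_congr rfl
  intro k _
  rw [hasseDeriv_apply, Polynomial.sum_def, Polynomial.sum_comp, Finset.sum_mul]
  apply Finset.sum_congr rfl
  intro n _
  rw [Polynomial.monomial_comp]
  rw [map_mul]
  rw [Polynomial.C_eq_natCast]
  ring

/-- Nonzero polynomials with pairwise distinct degrees are linearly independent. -/
lemma gks_linind {m : ℕ} (b : Fin m → F[X]) (h0 : ∀ i, b i ≠ 0)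
    (hinj : Function.Injective (fun i => (b i).natDegree)) :
    LinearIndependent F b := by
  classical
  rw [linearIndependent_iff']
  intro s g h i hi
  by_contra hgi
  have hs' : (s.filter fun j => g j ≠ 0).Nonempty := ⟨i, Finset.mem_filter.mpr ⟨hi, hgi⟩⟩
  obtain ⟨i0, hi0mem, hmax⟩ := Finset.exists_max_image _ (fun j => (b j).natDegree) hs'
  have hi0s : i0 ∈ s := (Finset.mem_filter.mp hi0mem).1
  have hgi0 : g i0 ≠ 0 := (Finset.mem_filter.mp hi0mem).2
  have hcoeff := congrArg (fun p : F[X] => p.coeff ((b i0).natDegree)) h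
  simp only [Polynomial.finset_sum_coeff, Polynomial.coeff_smul, Polynomial.coeff_zero,
    smul_eq_mul] at hcoeff
  rw [Finset.sum_eq_single i0] at hcoeff
  · exact hgi0 (by
      have hlc : (b i0).coeff ((b i0).natDegree) ≠ 0 :=
        Polynomial.leadingCoeff_ne_zero.mpr (h0 i0)
      exact (mul_eq_zero.mp hcoeff).resolve_right hlc)
  · intro j hj hjne
    rcases eq_or_ne (g j) 0 with hgj | hgj
    · rw [hgj, zero_mul]
    · have hjmem : j ∈ s.filter fun j => g j ≠ 0 := Finset.mem_filter.mpr ⟨hj, hgj⟩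
      have hle := hmax j hjmem
      have hne : (b j).natDegree ≠ (b i0).natDegree := fun hEq => hjne (hinj hEq)
      rw [Polynomial.coeff_eq_zero_of_natDegree_lt (lt_of_le_of_ne hle hne), mul_zero]
  · intro h'
    exact absurd hi0s h'

/-- Echelon basis: a subspace of polynomials of degree ≤ d has a spanning family
with distinct degrees. -/
lemma gks_echelon : ∀ (d : ℕ) (W : Submodule F F[X]), (∀ g ∈ W, g.natDegree ≤ d) →
    ∃ (m : ℕ) (b : Fin m → F[X]), (∀ i, b i ∈ W) ∧ (∀ i, b i ≠ 0) ∧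
      Function.Injective (fun i => (b i).natDegree) ∧ (∀ i, (b i).natDegree ≤ d) ∧
      ∀ g ∈ W, ∃ c : Fin m → F, g = ∑ i, c i • b i := by
  intro d
  induction d with
  | zero =>
    intro W hdeg
    by_cases hex : ∃ g0 ∈ W, g0 ≠ 0
    · obtain ⟨g0, hg0W, hg0⟩ := hex
      refine ⟨1, ![g0], by simp [hg0W], by simp [hg0], ?_, ?_, ?_⟩
      · intro i j _; exact Subsingleton.elim i j
      · intro i; simpa using hdeg g0 hg0W
      · intro g hgW
        have hgc : g = C (g.coeff 0) := Polynomial.eq_C_of_natDegree_le_zero (hdeg _ hgW)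
        obtain ⟨c0, rfl⟩ : ∃ c0, g0 = C c0 :=
          ⟨g0.coeff 0, Polynomial.eq_C_of_natDegree_le_zero (hdeg _ hg0W)⟩
        have hc0 : c0 ≠ 0 := fun h => hg0 (by rw [h, map_zero])
        refine ⟨fun _ => g.coeff 0 / c0, ?_⟩
        rw [Fin.sum_univ_one, Matrix.cons_val_zero, Polynomial.smul_C, smul_eq_mul,
          div_mul_cancel₀ _ hc0]
        exact hgc
    · refine ⟨0, Fin.elim0, (fun i => i.elim0), (fun i => i.elim0), (fun i => i.elim0),
        (fun i => i.elim0), ?_⟩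
      intro g hgW
      refine ⟨Fin.elim0, ?_⟩
      push_neg at hex
      rw [hex g hgW]
      simp
  | succ d ih =>
    intro W hdeg
    by_cases hex : ∃ g0 ∈ W, g0.coeff (d+1) ≠ 0
    · obtain ⟨g0, hg0W, hg0c⟩ := hex
      set W' : Submodule F F[X] := W ⊓ LinearMap.ker (Polynomial.lcoeff F (d+1)) with hW'
      have hW'mem : ∀ g, g ∈ W' ↔ g ∈ W ∧ g.coeff (d+1) = 0 := by
        intro g
        simp [hW', Submodule.mem_inf, LinearMap.mem_ker, Polynomial.lcoeff_apply]
      have hW'deg : ∀ g ∈ W', g.natDegree ≤ d := by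
        intro g hg
        rw [hW'mem] at hg
        rw [Polynomial.natDegree_le_iff_coeff_eq_zero]
        intro N hN
        rcases eq_or_lt_of_le (Nat.succ_le_of_lt hN) with h | h
        · rw [← h]; exact hg.2
        · exact Polynomial.coeff_eq_zero_of_natDegree_lt
            (lt_of_le_of_lt (hdeg g hg.1) h)
      obtain ⟨m', b', hb'W, hb'0, hb'inj, hb'deg, hb'span⟩ := ih W' hW'deg
      have hg0deg : g0.natDegree = d + 1 :=
        le_antisymm (hdeg g0 hg0W) (Polynomial.le_natDegree_of_ne_zero hg0c)
      refine ⟨m' + 1, Fin.cons g0 b', ?_, ?_, ?_, ?_, ?_⟩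
      · intro i
        induction i using Fin.cases with
        | zero => simpa using hg0W
        | succ j => simpa using ((hW'mem (b' j)).mp (hb'W j)).1
      · intro i
        induction i using Fin.cases with
        | zero => simpa using fun h => hg0c (by rw [h]; simp)
        | succ j => simpa using hb'0 j
      · intro i j hij
        simp only at hij
        induction i using Fin.cases with
        | zero =>
          induction j using Fin.cases with
          | zero => rfl
          | succ j' =>
            rw [Fin.cons_zero, Fin.cons_succ] at hij
            exfalso
            have hle := hb'deg j'
            rw [← hij, hg0deg] at hle
            omega
        | succ i' =>
          induction j using Fin.cases with
          | zero =>
            rw [Fin.cons_zero, Fin.cons_succ] at hij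
            have := hb'deg i'
            rw [hij, hg0deg] at this
            omega
          | succ j' =>
            rw [Fin.cons_succ, Fin.cons_succ] at hij
            rw [hb'inj hij]
      · intro i
        induction i using Fin.cases with
        | zero => simpa using le_of_eq hg0deg
        | succ j => simpa using le_trans (hb'deg j) (by omega)
      · intro g hgW
        set α := g.coeff (d+1) / g0.coeff (d+1) with hα
        have hsub : g - α • g0 ∈ W' := by
          rw [hW'mem]
          constructor
          · exact Submodule.sub_mem W hgW (Submodule.smul_mem W α hg0W)
          · rw [Polynomial.coeff_sub, Polynomial.coeff_smul, smul_eq_mul, hα,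
              div_mul_cancel₀ _ hg0c, sub_self]
        obtain ⟨c', hc'⟩ := hb'span _ hsub
        refine ⟨Fin.cons α c', ?_⟩
        rw [Fin.sum_univ_succ]
        simp only [Fin.cons_succ, Fin.cons_zero]
        rw [← hc']
        abel
    · push_neg at hex
      have hdeg' : ∀ g ∈ W, g.natDegree ≤ d := by
        intro g hg
        rw [Polynomial.natDegree_le_iff_coeff_eq_zero]
        intro N hN
        rcases eq_or_lt_of_le (Nat.succ_le_of_lt hN) with h | h
        · rw [← h]; exact hex g hg
        · exact Polynomial.coeff_eq_zero_of_natDegree_lt (lt_of_le_of_lt (hdeg g hg) h)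
      obtain ⟨m, b, h1, h2, h3, h4, h5⟩ := ih W hdeg'
      exact ⟨m, b, h1, h2, h3, fun i => le_trans (h4 i) (by omega), h5⟩

noncomputable def gksG (w d r : ℕ) (g : F[X]) : F[X] :=
  ∑ κ ∈ range (d+1), hasseDeriv (r + w*κ) g * X^((w-1)*κ)

/-- Decomposition of `g(X^w + X^(w-1))` into `w`-digit classes. -/
lemma gksG_decomp {w : ℕ} (hw : 0 < w) {d : ℕ} (g : F[X]) (hg : g.natDegree ≤ d) :
    g.comp ((X : F[X])^w + X^(w-1))
      = ∑ r ∈ range w, (X : F[X])^((w-1)*r) * Polynomial.expand F w (gksG w d r g) := by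
  rw [gks_taylor g (X^(w-1)) (X^w) (w*(d+1))
    (lt_of_le_of_lt hg (by nlinarith [hw]))]
  rw [gks_sum_range_mul w _ (d+1)]
  rw [Finset.sum_comm]
  apply Finset.sum_congr rfl
  intro r _
  rw [gksG, map_sum, Finset.mul_sum]
  apply Finset.sum_congr rfl
  intro κ _
  rw [map_mul, map_pow, Polynomial.expand_X, Polynomial.expand_eq_comp_X_pow]
  rw [← pow_mul, ← pow_mul]
  rw [show w * κ + r = r + w * κ by ring]
  rw [show (w-1) * (r + w*κ) = (w-1)*r + (w-1)*κ*w by ring]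
  rw [pow_add]
  ring

/-- Coefficients of `gksG` above the top vanish. -/
lemma gksG_coeff_high {w : ℕ} (hw : 0 < w) {d : ℕ} (g : F[X]) (r s : ℕ)
    (hs : g.natDegree < s + r) : (gksG w d r g).coeff s = 0 := by
  rw [gksG, Polynomial.finset_sum_coeff]
  apply Finset.sum_eq_zero
  intro κ _
  rw [Polynomial.coeff_mul_X_pow']
  split_ifs with hle
  · rw [Polynomial.hasseDeriv_coeff]
    rw [Polynomial.coeff_eq_zero_of_natDegree_lt, mul_zero]
    have hlin : w*κ = (w-1)*κ + κ := by
      obtain ⟨uu, rfl⟩ : ∃ uu, w = uu + 1 := ⟨w-1, by omega⟩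
      rw [Nat.add_sub_cancel, Nat.succ_mul]
    have : s - (w-1)*κ + (r + w*κ) = s + r + κ := by omega
    rw [this]
    omega
  · rfl

/-- Top coefficient of `gksG`. -/
lemma gksG_coeff_top {w : ℕ} (hw : 0 < w) {d : ℕ} (g : F[X]) (r : ℕ) (hr : r ≤ g.natDegree) :
    (gksG w d r g).coeff (g.natDegree - r)
      = (Nat.choose g.natDegree r : F) * g.leadingCoeff := by
  rw [gksG, Polynomial.finset_sum_coeff]
  rw [Finset.sum_eq_single 0]
  · simp only [Nat.mul_zero, Nat.add_zero, pow_zero, mul_one]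
    rw [Polynomial.hasseDeriv_coeff]
    rw [show g.natDegree - r + r = g.natDegree by omega]
    rfl
  · intro κ _ hκ
    rw [Polynomial.coeff_mul_X_pow']
    split_ifs with hle
    · rw [Polynomial.hasseDeriv_coeff]
      rw [Polynomial.coeff_eq_zero_of_natDegree_lt, mul_zero]
      have hlin : w*κ = (w-1)*κ + κ := by
        obtain ⟨uu, rfl⟩ : ∃ uu, w = uu + 1 := ⟨w-1, by omega⟩
        rw [Nat.add_sub_cancel, Nat.succ_mul]
      have : g.natDegree - r - (w-1)*κ + (r + w*κ) = g.natDegree + κ := by omega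
      rw [this]
      omega
    · rfl
  · intro h
    exact absurd (Finset.mem_range.mpr (by omega)) h

lemma gksG_eq_zero_of_lt {w d : ℕ} (hw : 0 < w) (g : F[X]) {r : ℕ}
    (hr : g.natDegree < r) : gksG w d r g = (0 : F[X]) := by
  ext s
  rw [gksG_coeff_high hw g r s (by omega), Polynomial.coeff_zero]

lemma gks_mul_coeff_top {w d : ℕ} (hw : 0 < w) (p g : F[X]) (r N : ℕ)
    (hN : r + N = p.natDegree + g.natDegree) (hr : r ≤ g.natDegree) :
    (p * gksG w d r g).coeff N
      = p.leadingCoeff * ((g.natDegree.choose r : F) * g.leadingCoeff) := by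
  rw [Polynomial.coeff_mul]
  rw [Finset.sum_eq_single (p.natDegree, g.natDegree - r)]
  · rw [gksG_coeff_top hw g r hr]
    rfl
  · intro q hq hqne
    have hmem : q.1 + q.2 = N := Finset.HasAntidiagonal.mem_antidiagonal.mp hq
    rcases lt_trichotomy q.1 p.natDegree with h | h | h
    · rw [gksG_coeff_high hw g r q.2 (by omega), mul_zero]
    · exfalso
      apply hqne
      have h2 : q.2 = g.natDegree - r := by omega
      exact Prod.ext h h2
    · rw [Polynomial.coeff_eq_zero_of_natDegree_lt h, zero_mul]
  · intro habs
    exact absurd (Finset.HasAntidiagonal.mem_antidiagonal.mpr (by omega)) habs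

lemma gks_mul_coeff_zero {w d : ℕ} (hw : 0 < w) (p g : F[X]) (r N : ℕ)
    (hN : p.natDegree + g.natDegree < r + N) :
    (p * gksG w d r g).coeff N = 0 := by
  rw [Polynomial.coeff_mul]
  apply Finset.sum_eq_zero
  intro q hq
  have hmem : q.1 + q.2 = N := Finset.HasAntidiagonal.mem_antidiagonal.mp hq
  rcases le_or_gt q.1 p.natDegree with h | h
  · rw [gksG_coeff_high hw g r q.2 (by omega), mul_zero]
  · rw [Polynomial.coeff_eq_zero_of_natDegree_lt h, zero_mul]

/-- Core univariate contradiction. -/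
lemma gks_univariate {w d : ℕ} (hw : 0 < w) (hchar : ringChar F = 0 ∨ d < ringChar F)
    {m : ℕ} (hmw : m ≤ w) (c b : Fin m → F[X])
    (hb0 : ∀ i, b i ≠ 0) (hbinj : Function.Injective (fun i => (b i).natDegree))
    (hbdeg : ∀ i, (b i).natDegree ≤ d)
    (hnz : ∃ i, c i ≠ 0)
    (hrel : ∑ i, Polynomial.expand F w (c i) * ((b i).comp ((X:F[X])^w + X^(w-1))) = 0) :
    False := by
  classical
  set H : ℕ → F[X] := fun r => ∑ i, c i * gksG w d r (b i) with hHdef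
  have h1 : ∑ r ∈ range w, (X : F[X])^((w-1)*r) * Polynomial.expand F w (H r) = 0 := by
    rw [← hrel]
    have hswap : ∀ i : Fin m, Polynomial.expand F w (c i) * ((b i).comp ((X:F[X])^w + X^(w-1)))
        = ∑ r ∈ range w, (X:F[X])^((w-1)*r)
            * (Polynomial.expand F w (c i) * Polynomial.expand F w (gksG w d r (b i))) := by
      intro i
      rw [gksG_decomp hw (b i) (hbdeg i), Finset.mul_sum]
      apply Finset.sum_congr rfl
      intro r _
      ring
    rw [Finset.sum_congr rfl (fun i _ => hswap i), Finset.sum_comm]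
    apply Finset.sum_congr rfl
    intro r _
    rw [hHdef]
    rw [map_sum, Finset.mul_sum]
    apply Finset.sum_congr rfl
    intro i _
    rw [map_mul]
  have hH : ∀ r < w, H r = 0 := gks_digit hw H h1
  -- leading-term extraction
  set S' : Finset (Fin m) := Finset.univ.filter (fun i => c i ≠ 0) with hS'def
  have hS'ne : S'.Nonempty := by
    obtain ⟨i, hi⟩ := hnz
    exact ⟨i, by simp [hS'def, hi]⟩
  set Mdeg : Fin m → ℕ := fun i => (c i).natDegree + (b i).natDegree with hMdegdef
  set M : ℕ := S'.sup Mdeg with hMdef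
  set S : Finset (Fin m) := S'.filter (fun i => Mdeg i = M) with hSdef
  have hSne : S.Nonempty := by
    obtain ⟨i, hi, hieq⟩ := Finset.exists_mem_eq_sup S' hS'ne Mdeg
    exact ⟨i, by simp [hSdef, hi, hieq.symm]; rfl⟩
  set lam : Fin m → F := fun i => (c i).leadingCoeff * (b i).leadingCoeff with hlamdef
  have hkey : ∀ r, r < w → r ≤ M →
      ∑ i ∈ S, lam i * (((b i).natDegree.choose r : F)) = 0 := by
    intro r hrw hrM
    have h2 := congrArg (fun p : F[X] => p.coeff (M - r)) (hH r hrw)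
    simp only [hHdef, Polynomial.finset_sum_coeff, Polynomial.coeff_zero] at h2
    have hvan : ∀ i ∈ Finset.univ (α := Fin m), i ∉ S →
        (c i * gksG w d r (b i)).coeff (M - r) = 0 := by
      intro i _ hiS
      by_cases hci : c i = 0
      · rw [hci, zero_mul, Polynomial.coeff_zero]
      · have hiS' : i ∈ S' := by simp [hS'def, hci]
        have hlt : Mdeg i < M := by
          have hle : Mdeg i ≤ M := Finset.le_sup hiS'
          have hne : Mdeg i ≠ M := by
            intro h
            exact hiS (by simp [hSdef, hiS', h])
          omega
        apply gks_mul_coeff_zero hw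
        have hmm : Mdeg i = (c i).natDegree + (b i).natDegree := rfl
        omega
    have hmain : ∀ i ∈ S, (c i * gksG w d r (b i)).coeff (M - r)
        = lam i * (((b i).natDegree.choose r : F)) := by
      intro i hiS
      have hieq : (c i).natDegree + (b i).natDegree = M :=
        (Finset.mem_filter.mp hiS).2
      rcases le_or_gt r ((b i).natDegree) with hrb | hrb
      · rw [gks_mul_coeff_top hw (c i) (b i) r (M - r) (by omega) hrb]
        simp only [hlamdef]
        ring
      · rw [gksG_eq_zero_of_lt hw (b i) hrb, mul_zero, Polynomial.coeff_zero]
        rw [Nat.choose_eq_zero_of_lt hrb]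
        simp
    calc ∑ i ∈ S, lam i * (((b i).natDegree.choose r : F))
        = ∑ i ∈ S, (c i * gksG w d r (b i)).coeff (M - r) :=
          (Finset.sum_congr rfl hmain).symm
      _ = ∑ i, (c i * gksG w d r (b i)).coeff (M - r) :=
          Finset.sum_subset (Finset.subset_univ S) hvan
      _ = 0 := h2
  -- build the sparse polynomial and contradict
  set Q : F[X] := ∑ i ∈ S, C (lam i) * (X + 1)^((b i).natDegree) with hQdef
  have hlamne : ∀ i ∈ S, lam i ≠ 0 := by
    intro i hiS
    have hci : c i ≠ 0 := by
      have := (Finset.mem_filter.mp hiS).1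
      exact (Finset.mem_filter.mp this).2
    exact mul_ne_zero (Polynomial.leadingCoeff_ne_zero.mpr hci)
      (Polynomial.leadingCoeff_ne_zero.mpr (hb0 i))
  have hdvd : (X : F[X]) ^ (min w (M+1)) ∣ Q := by
    rw [Polynomial.X_pow_dvd_iff]
    intro r hr
    rw [hQdef, Polynomial.finset_sum_coeff]
    rw [← hkey r (by omega) (by omega)]
    apply Finset.sum_congr rfl
    intro i _
    rw [Polynomial.coeff_C_mul, Polynomial.coeff_X_add_one_pow]
  have hcard : S.card ≤ min w (M+1) := by
    apply le_min
    · calc S.card ≤ Finset.univ.card := Finset.card_le_univ S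
        _ = m := by simp
        _ ≤ w := hmw
    · have himg : ∀ i ∈ S, (b i).natDegree ∈ Finset.range (M+1) := by
        intro i hiS
        have hieq : (c i).natDegree + (b i).natDegree = M :=
          (Finset.mem_filter.mp hiS).2
        exact Finset.mem_range.mpr (by omega)
      calc S.card ≤ (Finset.range (M+1)).card :=
            Finset.card_le_card_of_injOn (fun i => (b i).natDegree) himg
              (hbinj.injOn)
        _ = M+1 := Finset.card_range _
  exact gks_sparse hchar S.card S lam (fun i => (b i).natDegree) rfl hSne hlamne
    (hbinj.injOn) (fun i _ => hbdeg i)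
    (dvd_trans (pow_dvd_pow X hcard) hdvd)

lemma gks_single_eq_iff (a a' b b' : ℕ) :
    (Finsupp.single (0 : Fin 2) a' + Finsupp.single (1 : Fin 2) b'
      = Finsupp.single (0 : Fin 2) a + Finsupp.single (1 : Fin 2) b) ↔ (a' = a ∧ b' = b) := by
  constructor
  · intro h
    have h0 := DFunLike.congr_fun h (0 : Fin 2)
    have h1 := DFunLike.congr_fun h (1 : Fin 2)
    simp only [Finsupp.add_apply, Finsupp.single_apply] at h0 h1
    norm_num at h0 h1
    exact ⟨h0, h1⟩
  · rintro ⟨rfl, rfl⟩; rfl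

lemma gks_pair_coeff (a a' b' : ℕ) (P : F[X]) :
    MvPolynomial.coeff (Finsupp.single (0 : Fin 2) a + Finsupp.single (1 : Fin 2) b')
      ((MvPolynomial.X 0 : MvPolynomial (Fin 2) F)^(a') * Polynomial.aeval (MvPolynomial.X 1) P)
    = if a' = a then P.coeff b' else 0 := by
  classical
  rw [Polynomial.aeval_eq_sum_range (p := P)]
  rw [Finset.mul_sum, MvPolynomial.coeff_sum]
  have hterm : ∀ b'' : ℕ,
      MvPolynomial.coeff (Finsupp.single (0 : Fin 2) a + Finsupp.single (1 : Fin 2) b')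
        ((MvPolynomial.X 0 : MvPolynomial (Fin 2) F)^(a') * (P.coeff b'' • (MvPolynomial.X 1)^(b'')))
      = if a' = a ∧ b'' = b' then P.coeff b'' else 0 := by
    intro b''
    rw [mul_smul_comm, MvPolynomial.coeff_smul]
    rw [MvPolynomial.X_pow_eq_monomial, MvPolynomial.X_pow_eq_monomial,
      MvPolynomial.monomial_mul, mul_one, MvPolynomial.coeff_monomial]
    simp only [gks_single_eq_iff a a' b' b'']
    split_ifs with h
    · rw [smul_eq_mul, mul_one]
    · rw [smul_eq_mul, mul_zero]
  rw [Finset.sum_congr rfl (fun b'' _ => hterm b'')]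
  by_cases ha : a' = a
  · simp only [ha, true_and, if_true]
    rw [Finset.sum_ite_eq' (Finset.range (P.natDegree + 1)) b' (fun b'' => P.coeff b'')]
    split_ifs with hb
    · rfl
    · rw [Polynomial.coeff_eq_zero_of_natDegree_lt]
      rw [Finset.mem_range] at hb
      omega
  · simp only [ha, false_and, if_false]
    exact Finset.sum_const_zero

end GKSAux

open MvPolynomial

/-- if `f(y₁,y₂) = ∑_{i=1}^w u_i(y₁) v_i(y₂)` is a nonzero bivariate
polynomial of total degree at most `d` over a field of characteristic `0` or `> d`,
then `f(t^w, t^{w-1} + t^w) ≠ 0`. -/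
theorem bivariate_gks {F : Type*} [Field F] (w d : ℕ) (hw : 1 ≤ w)
    (u v : Fin w → Polynomial F) (f : MvPolynomial (Fin 2) F)
    (hf : f = ∑ i : Fin w,
      Polynomial.aeval (X 0 : MvPolynomial (Fin 2) F) (u i) *
        Polynomial.aeval (X 1 : MvPolynomial (Fin 2) F) (v i))
    (hdeg : f.totalDegree ≤ d) (hne : f ≠ 0)
    (hchar : ringChar F = 0 ∨ d < ringChar F) :
    MvPolynomial.aeval
      ![(Polynomial.X : Polynomial F) ^ w,
        (Polynomial.X : Polynomial F) ^ (w - 1) + Polynomial.X ^ w] f ≠ 0 := by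
  classical
  intro h0
  set N : ℕ := Finset.univ.sup (fun i => (u i).natDegree) with hNdef
  set R : ℕ → Polynomial F := fun a => ∑ i, (u i).coeff a • v i with hRdef
  -- Step 1: slice representation of f
  have hA1 : f = ∑ a ∈ Finset.range (N+1),
      (X 0 : MvPolynomial (Fin 2) F)^a * Polynomial.aeval (X 1) (R a) := by
    rw [hf]
    have hu : ∀ i, (Polynomial.aeval (X 0 : MvPolynomial (Fin 2) F)) (u i)
        = ∑ a ∈ Finset.range (N+1), (u i).coeff a • (X 0 : MvPolynomial (Fin 2) F)^a := by
      intro i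
      have hub : (u i).natDegree ≤ N :=
        Finset.le_sup (f := fun i => (u i).natDegree) (Finset.mem_univ i)
      exact Polynomial.aeval_eq_sum_range' (Nat.lt_succ_of_le hub) _
    calc ∑ i, (Polynomial.aeval (X 0 : MvPolynomial (Fin 2) F)) (u i)
          * Polynomial.aeval (X 1) (v i)
        = ∑ i, ∑ a ∈ Finset.range (N+1),
            ((u i).coeff a • (X 0 : MvPolynomial (Fin 2) F)^a)
              * Polynomial.aeval (X 1) (v i) := by
          apply Finset.sum_congr rfl
          intro i _
          rw [hu i, Finset.sum_mul]
      _ = ∑ a ∈ Finset.range (N+1), ∑ i,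
            ((u i).coeff a • (X 0 : MvPolynomial (Fin 2) F)^a)
              * Polynomial.aeval (X 1) (v i) := Finset.sum_comm
      _ = ∑ a ∈ Finset.range (N+1),
            (X 0 : MvPolynomial (Fin 2) F)^a * Polynomial.aeval (X 1) (R a) := by
          apply Finset.sum_congr rfl
          intro a _
          rw [hRdef]
          rw [map_sum, Finset.mul_sum]
          apply Finset.sum_congr rfl
          intro i _
          rw [map_smul, smul_mul_assoc, mul_smul_comm]
  -- Step 2: coefficient link and degree bound for slices
  have hlink : ∀ a ∈ Finset.range (N+1), ∀ b' : ℕ,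
      MvPolynomial.coeff (Finsupp.single 0 a + Finsupp.single 1 b') f = (R a).coeff b' := by
    intro a ha b'
    rw [hA1, MvPolynomial.coeff_sum]
    rw [Finset.sum_congr rfl (fun a' _ => gks_pair_coeff a a' b' (R a'))]
    rw [Finset.sum_ite_eq' (Finset.range (N+1)) a (fun a' => (R a').coeff b')]
    rw [if_pos ha]
  have hRdeg : ∀ a ∈ Finset.range (N+1), (R a).natDegree ≤ d := by
    intro a ha
    rw [Polynomial.natDegree_le_iff_coeff_eq_zero]
    intro b' hb'
    rw [← hlink a ha b']
    by_contra hc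
    have hmem : (Finsupp.single (0 : Fin 2) a + Finsupp.single 1 b') ∈ f.support :=
      MvPolynomial.mem_support_iff.mpr hc
    have hle := MvPolynomial.le_totalDegree hmem
    have hsum : ((Finsupp.single (0 : Fin 2) a + Finsupp.single 1 b').sum fun _ e => e)
        = a + b' := by
      rw [Finsupp.sum_add_index' (fun _ => rfl) (fun _ _ _ => rfl)]
      rw [Finsupp.sum_single_index rfl, Finsupp.sum_single_index rfl]
    rw [hsum] at hle
    omega
  -- Step 3: the span of the slices and its echelon basis
  set W : Submodule F (Polynomial F)
    := Submodule.span F (((Finset.range (N+1)).image R : Finset (Polynomial F)) : Set (Polynomial F)) with hWdef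
  have hWdeg : ∀ g ∈ W, g.natDegree ≤ d := by
    intro g hg
    have hle : W ≤ Polynomial.degreeLE F (d : ℕ) := by
      rw [hWdef]
      apply Submodule.span_le.mpr
      intro g' hg'
      simp only [Finset.coe_image, Set.mem_image, Finset.mem_coe, Finset.mem_range] at hg'
      obtain ⟨a, ha, rfl⟩ := hg'
      rw [SetLike.mem_coe, Polynomial.mem_degreeLE]
      exact Polynomial.natDegree_le_iff_degree_le.mp (hRdeg a (Finset.mem_range.mpr ha))
    have h2 := hle hg
    rw [Polynomial.mem_degreeLE] at h2
    exact Polynomial.natDegree_le_iff_degree_le.mpr h2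
  obtain ⟨m, b, hbW, hb0, hbinj, hbdeg, hbspan⟩ := gks_echelon d W hWdeg
  have hWle : W ≤ Submodule.span F (Set.range v) := by
    rw [hWdef]
    apply Submodule.span_le.mpr
    intro g' hg'
    simp only [Finset.coe_image, Set.mem_image, Finset.mem_coe, Finset.mem_range] at hg'
    obtain ⟨a, ha, rfl⟩ := hg'
    rw [SetLike.mem_coe, hRdef]
    apply Submodule.sum_mem
    intro i _
    exact Submodule.smul_mem _ _ (Submodule.subset_span ⟨i, rfl⟩)
  have hmw : m ≤ w := by
    haveI : Module.Finite F ↥(Submodule.span F (Set.range v)) :=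
      FiniteDimensional.span_of_finite F (Set.finite_range v)
    have hli : LinearIndependent F
        (fun i => (⟨b i, hWle (hbW i)⟩ : ↥(Submodule.span F (Set.range v)))) := by
      apply LinearIndependent.of_comp (Submodule.span F (Set.range v)).subtype
      exact gks_linind b hb0 hbinj
    have hcard := hli.fintype_card_le_finrank
    rw [Fintype.card_fin] at hcard
    refine le_trans hcard (le_trans (finrank_span_le_card (R := F) (Set.range v)) ?_)
    rw [Set.toFinset_range]
    exact le_trans (Finset.card_image_le) (by simp)
  -- Step 4: coordinates
  have hRW : ∀ a ∈ Finset.range (N+1), R a ∈ W := by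
    intro a ha
    rw [hWdef]
    exact Submodule.subset_span (by
      simp only [Finset.coe_image, Set.mem_image, Finset.mem_coe]
      exact ⟨a, ha, rfl⟩)
  have hco : ∀ a : ℕ, a ∈ Finset.range (N+1) → ∃ co : Fin m → F, R a = ∑ i, co i • b i :=
    fun a ha => hbspan (R a) (hRW a ha)
  set co : ℕ → Fin m → F := fun a =>
    if ha : a ∈ Finset.range (N+1) then Classical.choose (hco a ha) else 0 with hcodef
  have hco2 : ∀ a ∈ Finset.range (N+1), R a = ∑ i, co a i • b i := by
    intro a ha
    rw [hcodef]
    simp only [dif_pos ha]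
    exact Classical.choose_spec (hco a ha)
  set c : Fin m → Polynomial F := fun i =>
    ∑ a ∈ Finset.range (N+1), Polynomial.C (co a i) * Polynomial.X^a with hcdef
  -- Step 5: representation of f with the echelon basis
  have hE3 : f = ∑ i, Polynomial.aeval (X 0 : MvPolynomial (Fin 2) F) (c i)
      * Polynomial.aeval (X 1 : MvPolynomial (Fin 2) F) (b i) := by
    rw [hA1]
    have hc_eval : ∀ i, Polynomial.aeval (X 0 : MvPolynomial (Fin 2) F) (c i)
        = ∑ a ∈ Finset.range (N+1), MvPolynomial.C (co a i)
            * (X 0 : MvPolynomial (Fin 2) F)^a := by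
      intro i
      rw [hcdef]
      rw [map_sum]
      apply Finset.sum_congr rfl
      intro a _
      rw [map_mul, map_pow, Polynomial.aeval_X, Polynomial.aeval_C]
      rfl
    calc ∑ a ∈ Finset.range (N+1), (X 0 : MvPolynomial (Fin 2) F)^a
          * Polynomial.aeval (X 1) (R a)
        = ∑ a ∈ Finset.range (N+1), ∑ i, MvPolynomial.C (co a i)
            * (X 0 : MvPolynomial (Fin 2) F)^a * Polynomial.aeval (X 1) (b i) := by
          apply Finset.sum_congr rfl
          intro a ha
          rw [hco2 a ha, map_sum, Finset.mul_sum]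
          apply Finset.sum_congr rfl
          intro i _
          rw [map_smul, MvPolynomial.smul_eq_C_mul]
          ring
      _ = ∑ i, ∑ a ∈ Finset.range (N+1), MvPolynomial.C (co a i)
            * (X 0 : MvPolynomial (Fin 2) F)^a * Polynomial.aeval (X 1) (b i) :=
          Finset.sum_comm
      _ = ∑ i, Polynomial.aeval (X 0 : MvPolynomial (Fin 2) F) (c i)
          * Polynomial.aeval (X 1 : MvPolynomial (Fin 2) F) (b i) := by
          apply Finset.sum_congr rfl
          intro i _
          rw [hc_eval i, Finset.sum_mul]
  -- Step 6: not all c i vanish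
  have hnz : ∃ i, c i ≠ 0 := by
    by_contra hczero
    push_neg at hczero
    apply hne
    rw [hE3]
    apply Finset.sum_eq_zero
    intro i _
    rw [hczero i, map_zero, zero_mul]
  -- Step 7: the univariate relation
  have hrel : ∑ i, Polynomial.expand F w (c i)
      * ((b i).comp ((Polynomial.X : Polynomial F)^w + Polynomial.X^(w-1))) = 0 := by
    have h4 : (0 : Polynomial F)
        = ∑ i, Polynomial.aeval ((Polynomial.X : Polynomial F)^w) (c i)
            * Polynomial.aeval ((Polynomial.X : Polynomial F)^(w-1)
              + (Polynomial.X : Polynomial F)^w) (b i) := by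
      calc (0 : Polynomial F)
          = MvPolynomial.aeval
              ![(Polynomial.X : Polynomial F) ^ w,
                (Polynomial.X : Polynomial F) ^ (w - 1) + Polynomial.X ^ w] f := h0.symm
        _ = _ := by
            rw [hE3, map_sum]
            apply Finset.sum_congr rfl
            intro i _
            rw [map_mul, ← Polynomial.aeval_algHom_apply, ← Polynomial.aeval_algHom_apply]
            simp only [MvPolynomial.aeval_X, Matrix.cons_val_zero, Matrix.cons_val_one,
              Matrix.head_cons]
    refine Eq.trans ?_ h4.symm
    apply Finset.sum_congr rfl
    intro i _
    rw [Polynomial.expand_eq_comp_X_pow, Polynomial.comp_eq_aeval, Polynomial.comp_eq_aeval,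
      add_comm ((Polynomial.X : Polynomial F)^w) ((Polynomial.X : Polynomial F)^(w-1))]
  exact gks_univariate (by omega : 0 < w) hchar hmw c b hb0 hbinj hbdeg hnz hrel
end

section
/- Let $V$ be a vector space of polynomials in $\mathbb{F}[y_1,\ldots,y_n]$ of degree at most $d$, and suppose $\mathrm{wt}: \{y_1,\ldots,y_n\} \to [M]^k$ is a basis isolating weight assignment for $V$. Then for any $f \in V$: $f \ne 0$ if and only if the $k$-variate polynomial $f(\mathbf{t}^{\mathrm{wt}(y_1)}, \ldots, \mathbf{t}^{\mathrm{wt}(y_n)}) \in \mathbb{F}[t_1,\ldots,t_k]$ is nonzero, where $\mathbf{t}^{(\alpha_1,\ldots,\alpha_k)}$ denotes $t_1^{\alpha_1}\cdots t_k^{\alpha_k}$. -/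
/-- The substitution `y_x ↦ t^{wt(y_x)} = t_1^{wt(y_x)_1} ⋯ t_k^{wt(y_x)_k}` applied to a
multilinear polynomial `f ∈ 𝔽[y_1,…,y_n]` (given by its coefficient function on
multilinear monomials): the result is the `k`-variate polynomial
`∑_S f_S · t^{∑_{x ∈ S} wt(y_x)}`. -/
noncomputable def substWt {F : Type*} [Field F] {n k : ℕ} (wt : Fin n → Fin k → ℕ)
    (f : Finset (Fin n) → F) : MvPolynomial (Fin k) F :=
  ∑ S : Finset (Fin n),
    MvPolynomial.monomial (Finsupp.equivFunOnFinite.symm (∑ x ∈ S, wt x)) (f S)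

noncomputable instance lexFinNatLinearOrder {k : ℕ} : LinearOrder (Lex ((_ : Fin k) → ℕ)) :=
  @Pi.Lex.linearOrder (Fin k) (fun _ => ℕ)
    (inferInstance : LinearOrder (Fin k)) (inferInstance : WellFoundedLT (Fin k))
    (fun _ => inferInstance)

/-- if `wt : y → [M]^k` is a BIWA for the space `V` of (multilinear)
polynomials, then for every `f ∈ V`, `f ≠ 0` iff
`f(t^{wt(y_1)}, …, t^{wt(y_n)}) ≠ 0`. -/
theorem biwa_preserves_nonzero {F : Type*} [Field F] {n k M : ℕ}
    (V : Submodule F (Finset (Fin n) → F))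
    (wt : Fin n → Fin k → ℕ) (hM : ∀ x j, 1 ≤ wt x j ∧ wt x j ≤ M)
    (hbiwa : IsBIWA (fun S : Finset (Fin n) => ∑ x ∈ S, wt x) V)
    (f : Finset (Fin n) → F) (hf : f ∈ V) :
    f ≠ 0 ↔ substWt wt f ≠ 0 := by
  classical
  set W : Finset (Fin n) → Fin k → ℕ := fun S => ∑ x ∈ S, wt x with hWdef
  constructor
  · intro hne
    obtain ⟨B, hdist, _, hspan⟩ := hbiwa
    set v : V := ⟨f, hf⟩ with hv
    have hcol : ∀ m, col V m v = f m := fun m => rfl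
    -- key vanishing lemma
    have key : ∀ (P : Finset (Fin n) → Prop), (∀ b ∈ B, P b → f b = 0) →
        ∀ m, col V m ∈ Submodule.span F (col V '' {m' | m' ∈ B ∧ P m'}) → f m = 0 := by
      intro P hP m hm
      have hle : Submodule.span F (col V '' {m' | m' ∈ B ∧ P m'}) ≤
          LinearMap.ker (LinearMap.applyₗ (R := F) v) := by
        rw [Submodule.span_le]
        rintro _ ⟨m', ⟨hm'B, hm'P⟩, rfl⟩
        simp only [SetLike.mem_coe, LinearMap.mem_ker, LinearMap.applyₗ_apply_apply]
        rw [hcol m', hP m' hm'B hm'P]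
      have := hle hm
      simpa only [LinearMap.mem_ker, LinearMap.applyₗ_apply_apply, hcol m] using this
    -- step 1: some b ∈ B has f b ≠ 0
    have hex : ∃ b ∈ B, f b ≠ 0 := by
      by_contra h
      push_neg at h
      apply hne
      funext m
      show f m = 0
      by_cases hmB : m ∈ B
      · exact h m hmB
      · exact key (fun m' => LexLt (W m') (W m)) (fun b hb _ => h b hb) m (hspan m hmB)
    obtain ⟨b, hbB, hbne⟩ := hex
    -- step 2: take b₀ ∈ B with f b₀ ≠ 0 of lex-minimal weight
    let T : Finset (Finset (Fin n)) := Finset.univ.filter (fun S => S ∈ B ∧ f S ≠ 0)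
    have hbT : b ∈ T := by simp [T, hbB, hbne]
    obtain ⟨b₀, hb₀T, hmin⟩ := T.exists_min_image (fun S => toLex (W S)) ⟨b, hbT⟩
    have hb₀ : b₀ ∈ B ∧ f b₀ ≠ 0 := by simpa [T] using hb₀T
    -- step 3: the coefficient of substWt wt f at weight W b₀ is f b₀
    have hcoeff : MvPolynomial.coeff (Finsupp.equivFunOnFinite.symm (W b₀)) (substWt wt f)
        = f b₀ := by
      rw [substWt, MvPolynomial.coeff_sum]
      rw [Finset.sum_eq_single b₀]
      · simp [MvPolynomial.coeff_monomial, W]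
      · intro S _ hS
        rw [MvPolynomial.coeff_monomial]
        split_ifs with h
        · have hWS : W S = W b₀ := Finsupp.equivFunOnFinite.symm.injective h
          by_cases hSB : S ∈ B
          · exact absurd hWS (hdist S hSB b₀ hb₀.1 hS)
          · refine key (fun m' => LexLt (W m') (W S)) ?_ S (hspan S hSB)
            intro b' hb' hlex
            by_contra hfb'
            have hle : toLex (W b₀) ≤ toLex (W b') :=
              hmin b' (by simp [T, hb', hfb'])
            have hlt : toLex (W b') < toLex (W b₀) := by
              rw [← hWS]; exact hlex
            exact absurd hle (not_le_of_gt hlt)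
        · rfl
      · intro hb₀u
        exact absurd (Finset.mem_univ b₀) hb₀u
    intro hzero
    rw [hzero] at hcoeff
    simp only [MvPolynomial.coeff_zero] at hcoeff
    exact hb₀.2 hcoeff.symm
  · intro hsub hf0
    apply hsub
    rw [hf0]
    simp [substWt]
end
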